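/- arXiv:1702.03850 — 8 statements merged into one kernel-verified Lean document; each statement's English description precedes it below -/
import Mathlib

section
/- Every inductively monothetic locally compact Hausdorff topological group is abelian and σ-compact (i.e., it is the union of countably many compact subsets). -/
open scoped Pointwise

open Subgroup Set in
/-- In any group, the set of `N`-th roots of unity inside a cyclic subgroup has at most
`N` elements. -/
private lemma aux_roots_in_zpowers {Q : Type*} [Group Q] (q : Q) {N : ℕ} (hN : 0 < N) :
    {x : Q | x ∈ zpowers q ∧ x ^ N = 1}.Finite ∧
      {x : Q | x ∈ zpowers q ∧ x ^ N = 1}.ncard ≤ N := by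
  classical
  by_cases hq : IsOfFinOrder q
  · have hfin : (zpowers q : Set Q).Finite := hq.finite_zpowers
    haveI : Finite ↥(zpowers q) := hfin.to_subtype
    haveI : Fintype ↥(zpowers q) := Fintype.ofFinite _
    have himg : {x : Q | x ∈ zpowers q ∧ x ^ N = 1} =
        (Subtype.val : ↥(zpowers q) → Q) '' {y : ↥(zpowers q) | y ^ N = 1} := by
      ext x
      constructor
      · rintro ⟨hx, hxN⟩
        exact ⟨⟨x, hx⟩, by ext; simpa using hxN, rfl⟩
      · rintro ⟨y, hy, rfl⟩
        exact ⟨y.2, by simpa using congrArg (Subtype.val) hy⟩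
    haveI : IsCyclic ↥(zpowers q) :=
      ⟨⟨⟨q, mem_zpowers q⟩, fun x => by
        obtain ⟨k, hk⟩ := x.2
        exact ⟨k, Subtype.ext (by simpa using hk)⟩⟩⟩
    have hcard : {y : ↥(zpowers q) | y ^ N = 1}.ncard ≤ N := by
      have := IsCyclic.card_pow_eq_one_le (α := ↥(zpowers q)) (n := N) hN
      rw [Set.ncard_eq_toFinset_card' ]
      simpa [Set.toFinset_setOf] using this
    constructor
    · rw [himg]; exact (Set.toFinite _).image _
    · rw [himg, Set.ncard_image_of_injective _ Subtype.coe_injective]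
      exact hcard
  · have hsub : {x : Q | x ∈ zpowers q ∧ x ^ N = 1} ⊆ {1} := by
      rintro x ⟨hx, hxN⟩
      obtain ⟨k, rfl⟩ := hx
      have : (fun n : ℤ => q ^ n) (k * N) = (fun n : ℤ => q ^ n) 0 := by
        simpa [zpow_mul] using hxN
      have hk : k * N = 0 := injective_zpow_iff_not_isOfFinOrder.2 hq this
      have : k = 0 := by
        rcases mul_eq_zero.1 hk with h | h
        · exact h
        · exact absurd h (by exact_mod_cast hN.ne')
      simp [this]
    constructor
    · exact (Set.finite_singleton 1).subset hsub
    · exact le_trans (Set.ncard_le_ncard hsub (Set.finite_singleton 1)) (by simp; omega)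

open Subgroup Set in
/-- A "locally cyclic" abelian group is countable. -/
private lemma aux_countable {Q : Type*} [Group Q]
    (comm : ∀ a b : Q, a * b = b * a)
    (mono : ∀ s : Set Q, s.Finite → ∃ q : Q, ∀ x ∈ s, x ∈ zpowers q) :
    Countable Q := by
  have hT : ∀ N : ℕ, 0 < N → {t : Q | t ^ N = 1}.Finite := by
    intro N hN
    by_contra hinf
    have hinf : {t : Q | t ^ N = 1}.Infinite := hinf
    obtain ⟨t, hts, htfin, htcard⟩ := hinf.exists_subset_ncard_eq (N + 1)
    obtain ⟨q, hq⟩ := mono t htfin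
    have hsub : t ⊆ {x : Q | x ∈ zpowers q ∧ x ^ N = 1} :=
      fun x hx => ⟨hq x hx, hts hx⟩
    have h1 := Set.ncard_le_ncard hsub (aux_roots_in_zpowers q hN).1
    have h2 := (aux_roots_in_zpowers q hN).2
    omega
  rcases subsingleton_or_nontrivial Q with hQ | hQ
  · infer_instance
  · obtain ⟨a, ha⟩ := exists_ne (1 : Q)
    have key : ∀ x : Q, ∃ (N : ℕ) (m : ℤ), 0 < N ∧ x ^ N = a ^ m := by
      intro x
      obtain ⟨q, hq⟩ := mono {x, a} ((Set.finite_singleton a).insert x)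
      obtain ⟨k, hk⟩ := Subgroup.mem_zpowers_iff.1 (hq x (by simp))
      obtain ⟨n, hn⟩ := Subgroup.mem_zpowers_iff.1 (hq a (by simp))
      have hn0 : n ≠ 0 := by rintro rfl; exact ha (by simpa using hn.symm)
      have hxn : x ^ n = a ^ k := by
        rw [← hk, ← hn, ← zpow_mul, ← zpow_mul, mul_comm]
      have hNpos : 0 < n.natAbs := Int.natAbs_pos.2 hn0
      rcases Int.natAbs_eq n with hsg | hsg
      · refine ⟨n.natAbs, k, hNpos, ?_⟩
        rw [← zpow_natCast, ← hsg]; exact hxn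
      · refine ⟨n.natAbs, -k, hNpos, ?_⟩
        rw [hsg] at hxn
        rw [← zpow_natCast, zpow_neg a k, ← hxn, ← zpow_neg, neg_neg]
    have hcover : (univ : Set Q) ⊆ ⋃ p : ℕ × ℤ, {x : Q | 0 < p.1 ∧ x ^ p.1 = a ^ p.2} := by
      intro x _
      obtain ⟨N, m, hN, hx⟩ := key x
      exact Set.mem_iUnion.2 ⟨(N, m), hN, hx⟩
    have hcnt : ∀ p : ℕ × ℤ, {x : Q | 0 < p.1 ∧ x ^ p.1 = a ^ p.2}.Countable := by
      rintro ⟨N, m⟩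
      by_cases hN : 0 < N
      · rcases Set.eq_empty_or_nonempty {x : Q | 0 < N ∧ x ^ N = a ^ m} with he | ⟨x₀, hx₀⟩
        · rw [he]; exact Set.countable_empty
        · have hsub : {x : Q | 0 < N ∧ x ^ N = a ^ m} ⊆ (x₀ * ·) '' {t : Q | t ^ N = 1} := by
            rintro x ⟨-, hx⟩
            refine ⟨x₀⁻¹ * x, ?_, by simp⟩
            have hc : Commute x₀⁻¹ x := comm _ _
            simp only [Set.mem_setOf_eq]
            rw [hc.mul_pow, inv_pow, hx₀.2, hx, inv_mul_cancel]
          exact (((hT N hN).image _).subset hsub).countable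
      · have : {x : Q | 0 < N ∧ x ^ N = a ^ m} = ∅ := by
          ext x; simp [hN]
        simp [this]
    rw [← Set.countable_univ_iff]
    exact Set.Countable.mono hcover (Set.countable_iUnion hcnt)

open Set in
/-- The subgroup generated by a compact set is covered by countably many compact sets. -/
private lemma aux_cover {G : Type*} [Group G] [TopologicalSpace G] [IsTopologicalGroup G]
    {K : Set G} (hK : IsCompact K) :
    ∃ C : ℕ → Set G, (∀ n, IsCompact (C n)) ∧
      ((Subgroup.closure K : Subgroup G) : Set G) ⊆ ⋃ n, C n := by
  set T : Set G := insert 1 (K ∪ K⁻¹) with hT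
  have hTc : IsCompact T := (hK.union hK.inv).insert 1
  have h1T : (1 : G) ∈ T := Set.mem_insert _ _
  refine ⟨fun n => T ^ (n + 1), ?_, ?_⟩
  · intro n
    induction n with
    | zero => simpa using hTc
    | succ n ih =>
      simp only at ih ⊢
      rw [pow_succ]
      exact ih.mul hTc
  · intro x hx
    have hx' : x ∈ Submonoid.closure (K ∪ K⁻¹) := by
      rw [← Subgroup.closure_toSubmonoid K]
      exact hx
    obtain ⟨l, hl, rfl⟩ := Submonoid.exists_list_of_mem_closure hx'
    have : ∀ l : List G, (∀ y ∈ l, y ∈ T) → ∃ n, l.prod ∈ T ^ (n + 1) := by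
      intro l
      induction l with
      | nil => exact fun _ => ⟨0, by simpa using h1T⟩
      | cons a t ih =>
        intro hl
        obtain ⟨n, hn⟩ := ih fun y hy => hl y (List.mem_cons_of_mem a hy)
        refine ⟨n + 1, ?_⟩
        rw [List.prod_cons, pow_succ']
        exact Set.mul_mem_mul (hl a (List.mem_cons_self (a := a) (l := t))) hn
    obtain ⟨n, hn⟩ := this l fun y hy => Set.mem_insert_of_mem _ (hl y hy)
    exact Set.mem_iUnion.2 ⟨n, hn⟩

/-- A topological group `G` is *inductively monothetic* if for every finite subset `F` of `G`
there exists `g ∈ G` such that the closure of the subgroup generated by `F` equals the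
closure of the cyclic subgroup generated by `g`. -/
def InductivelyMonothetic (G : Type*) [Group G] [TopologicalSpace G] : Prop :=
  ∀ F : Finset G, ∃ g : G,
    closure ((Subgroup.closure (F : Set G) : Subgroup G) : Set G) =
      closure ((Subgroup.zpowers g : Subgroup G) : Set G)

/-- Every inductively monothetic locally compact Hausdorff topological group is abelian
and σ-compact. -/
theorem stmt0 {G : Type*} [Group G] [TopologicalSpace G] [IsTopologicalGroup G]
    [LocallyCompactSpace G] [T2Space G]
    (h : InductivelyMonothetic G) :
    (∀ a b : G, a * b = b * a) ∧ SigmaCompactSpace G := by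
  classical
  -- Part 1: abelian
  have habelian : ∀ a b : G, a * b = b * a := by
    intro a b
    obtain ⟨g, hg⟩ := h {a, b}
    have hmemS : ∀ x ∈ ({a, b} : Finset G),
        x ∈ closure ((Subgroup.zpowers g : Subgroup G) : Set G) := by
      intro x hx
      rw [← hg]
      exact subset_closure (Subgroup.subset_closure (by exact_mod_cast hx))
    have step1 : ∀ y ∈ ((Subgroup.zpowers g : Subgroup G) : Set G), ∀ x ∈ closure ((Subgroup.zpowers g : Subgroup G) : Set G), x * y = y * x := by
      intro y hy
      have hcl : IsClosed {x : G | x * y = y * x} :=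
        isClosed_eq (continuous_id.mul continuous_const) (continuous_const.mul continuous_id)
      have hsub : ((Subgroup.zpowers g : Subgroup G) : Set G) ⊆ {x : G | x * y = y * x} := by
        rintro x hx
        obtain ⟨j, hj⟩ := hx
        obtain ⟨k, hk⟩ := hy
        simp only at hj hk
        subst hj; subst hk
        exact ((Commute.refl g).zpow_zpow j k).eq
      exact fun x hx => closure_minimal hsub hcl hx
    have step2 : ∀ x ∈ closure ((Subgroup.zpowers g : Subgroup G) : Set G),
        ∀ y ∈ closure ((Subgroup.zpowers g : Subgroup G) : Set G), x * y = y * x := by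
      intro x hx
      have hcl : IsClosed {y : G | x * y = y * x} :=
        isClosed_eq (continuous_const.mul continuous_id) (continuous_id.mul continuous_const)
      have hsub : ((Subgroup.zpowers g : Subgroup G) : Set G) ⊆ {y : G | x * y = y * x} :=
        fun y hy => step1 y hy x hx
      exact fun y hy => closure_minimal hsub hcl hy
    exact step2 a (hmemS a (by simp)) b (hmemS b (by simp))
  refine ⟨habelian, ?_⟩
  -- Part 2: sigma-compact
  obtain ⟨K, hKc, hKn⟩ := exists_compact_mem_nhds (1 : G)
  set H : Subgroup G := Subgroup.closure K with hHdef
  have hHopen : IsOpen (H : Set G) :=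
    Subgroup.isOpen_of_mem_nhds H (Filter.mem_of_superset hKn Subgroup.subset_closure)
  haveI hHnormal : H.Normal := ⟨fun n hn g => by
    rw [habelian g n, mul_assoc, mul_inv_cancel, mul_one]; exact hn⟩
  obtain ⟨C, hCc, hCsub⟩ := aux_cover hKc
  have rep_spec : ∀ x : G ⧸ H, QuotientGroup.mk (QuotientGroup.mk_surjective x).choose = x :=
    fun x => (QuotientGroup.mk_surjective x).choose_spec
  set rep : G ⧸ H → G := fun x => (QuotientGroup.mk_surjective x).choose with hrep
  -- the quotient is locally cyclic
  have hQmono : ∀ s : Set (G ⧸ H), s.Finite →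
      ∃ q : G ⧸ H, ∀ x ∈ s, x ∈ Subgroup.zpowers q := by
    intro s hs
    set F : Finset G := hs.toFinset.image rep with hF
    obtain ⟨g, hg⟩ := h F
    have hopen : IsOpen ((Subgroup.zpowers g ⊔ H : Subgroup G) : Set G) :=
      Subgroup.isOpen_mono le_sup_right hHopen
    have hclosed : IsClosed ((Subgroup.zpowers g ⊔ H : Subgroup G) : Set G) :=
      Subgroup.isClosed_of_isOpen _ hopen
    have hsub : closure ((Subgroup.zpowers g : Subgroup G) : Set G) ⊆
        ((Subgroup.zpowers g ⊔ H : Subgroup G) : Set G) :=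
      closure_minimal (SetLike.coe_subset_coe.2 le_sup_left) hclosed
    have hmap : Subgroup.map (QuotientGroup.mk' H) (Subgroup.zpowers g ⊔ H) ≤
        Subgroup.zpowers (QuotientGroup.mk g : G ⧸ H) := by
      rw [Subgroup.map_sup, MonoidHom.map_zpowers]
      refine sup_le le_rfl ?_
      rintro _ ⟨z, hz, rfl⟩
      have : (QuotientGroup.mk' H) z = 1 := (QuotientGroup.eq_one_iff z).2 hz
      rw [this]
      exact one_mem _
    refine ⟨QuotientGroup.mk g, fun x hx => ?_⟩
    have hrepF : rep x ∈ (F : Set G) := by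
      simp only [hF, Finset.coe_image, Set.mem_image]
      exact ⟨x, by simpa using hx, rfl⟩
    have h1 : rep x ∈ closure ((Subgroup.closure (F : Set G) : Subgroup G) : Set G) :=
      subset_closure (Subgroup.subset_closure hrepF)
    rw [hg] at h1
    have h2 : rep x ∈ (Subgroup.zpowers g ⊔ H : Subgroup G) := hsub h1
    have h3 : x ∈ Subgroup.map (QuotientGroup.mk' H) (Subgroup.zpowers g ⊔ H) :=
      ⟨rep x, h2, rep_spec x⟩
    exact hmap h3
  have hQcomm : ∀ a b : G ⧸ H, a * b = b * a := by
    intro a b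
    induction a using QuotientGroup.induction_on with | H a =>
    induction b using QuotientGroup.induction_on with | H b =>
    rw [← QuotientGroup.mk_mul, ← QuotientGroup.mk_mul, habelian]
  haveI hQcount : Countable (G ⧸ H) := aux_countable hQcomm hQmono
  refine SigmaCompactSpace.of_countable
    (Set.range (fun p : (G ⧸ H) × ℕ => rep p.1 • C p.2)) (Set.countable_range _) ?_ ?_
  · rintro _ ⟨p, rfl⟩
    exact (hCc p.2).smul (rep p.1)
  · rw [Set.sUnion_range]
    refine Set.eq_univ_iff_forall.2 fun x => ?_
    have hmem : (rep (QuotientGroup.mk x))⁻¹ * x ∈ H := by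
      have := rep_spec (QuotientGroup.mk x : G ⧸ H)
      exact (QuotientGroup.eq).1 this
    obtain ⟨n, hn⟩ := Set.mem_iUnion.1 (hCsub hmem)
    refine Set.mem_iUnion.2 ⟨(QuotientGroup.mk x, n), ?_⟩
    refine ⟨(rep (QuotientGroup.mk x))⁻¹ * x, hn, ?_⟩
    simp [smul_eq_mul, mul_inv_cancel_left]
end

section
/- Let G be a locally compact Hausdorff totally disconnected topological group which is monothetic. Then G is inductively monothetic. -/
open Set Filter Topology

section Aux
variable {G : Type*} [Group G] [TopologicalSpace G] [IsTopologicalGroup G]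

lemma myMulComm [T2Space G] {g₀ : G}
    (hd : Dense ((Subgroup.zpowers g₀ : Subgroup G) : Set G)) (a b : G) : a * b = b * a := by
  have h1 : ∀ n : ℤ, ∀ b : G, g₀ ^ n * b = b * g₀ ^ n := by
    intro n b
    have hcl : IsClosed {x : G | g₀ ^ n * x = x * g₀ ^ n} :=
      isClosed_eq (continuous_const.mul continuous_id) (continuous_id.mul continuous_const)
    have hsub : ((Subgroup.zpowers g₀ : Subgroup G) : Set G) ⊆
        {x : G | g₀ ^ n * x = x * g₀ ^ n} := by
      rintro x hx
      obtain ⟨m, rfl⟩ := Subgroup.mem_zpowers_iff.mp hx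
      simp only [Set.mem_setOf_eq, ← zpow_add, add_comm]
    exact hcl.closure_subset_iff.2 hsub (hd b)
  have hcl : IsClosed {x : G | x * b = b * x} :=
    isClosed_eq (continuous_id.mul continuous_const) (continuous_const.mul continuous_id)
  have hsub : ((Subgroup.zpowers g₀ : Subgroup G) : Set G) ⊆ {x : G | x * b = b * x} := by
    rintro x hx
    obtain ⟨m, rfl⟩ := Subgroup.mem_zpowers_iff.mp hx
    exact h1 m b
  exact hcl.closure_subset_iff.2 hsub (hd a)

end Aux

open Set Filter Topology Pointwise

section MonoAux
variable {G : Type*} [Group G] [TopologicalSpace G] [IsTopologicalGroup G]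

open scoped Pointwise in
lemma myExistMulClosure {W : Set G} (Wc : IsCompact W) (Wo : IsOpen W) :
    ∃ T ∈ 𝓝 (1 : G), W * T ⊆ W := by
  apply Wc.induction_on (p := fun S ↦ ∃ T ∈ 𝓝 (1 : G), S * T ⊆ W)
    ⟨Set.univ, by simp only [univ_mem, Set.empty_mul, Set.empty_subset, and_self]⟩
    (fun _ _ huv ⟨T, hT, mem⟩ ↦ ⟨T, hT, (Set.mul_subset_mul_right huv).trans mem⟩)
    fun U V ⟨T₁, hT₁, mem1⟩ ⟨T₂, hT₂, mem2⟩ ↦ ⟨T₁ ∩ T₂, inter_mem hT₁ hT₂, by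
      rw [Set.union_mul]
      exact Set.union_subset ((Set.mul_subset_mul_left Set.inter_subset_left).trans mem1)
        ((Set.mul_subset_mul_left Set.inter_subset_right).trans mem2)⟩
  intro x memW
  have : (x, 1) ∈ (fun p : G × G ↦ p.1 * p.2) ⁻¹' W := by simp [memW]
  rcases isOpen_prod_iff.mp (continuous_mul.isOpen_preimage W Wo) x 1 this with
    ⟨U, V, Uopen, Vopen, xmemU, onememV, prodsub⟩
  have h6 : U * V ⊆ W := Set.mul_subset_iff.mpr (fun _ hx _ hy ↦ prodsub (Set.mk_mem_prod hx hy))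
  exact ⟨U ∩ W, ⟨U, Uopen.mem_nhds xmemU, W, fun _ a ↦ a, rfl⟩,
    V, IsOpen.mem_nhds Vopen onememV,
    fun _ a ↦ h6 ((Set.mul_subset_mul_right Set.inter_subset_left) a)⟩

theorem stmt1Dichot [LocallyCompactSpace G] [T2Space G] [TotallyDisconnectedSpace G]
    {g₀ : G} (hd : Dense ((Subgroup.zpowers g₀ : Subgroup G) : Set G))
    (hone : ¬ IsOpen ({1} : Set G)) : CompactSpace G := by
  obtain ⟨K, hKc, h1K, -⟩ := exists_compact_subset isOpen_univ (mem_univ (1 : G))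
  obtain ⟨W, hWclopen, h1W, hWK⟩ :=
    loc_compact_Haus_tot_disc_of_zero_dim.exists_subset_of_mem_open h1K isOpen_interior
  have hWclopen : IsClopen W := hWclopen
  have hWc : IsCompact W := hKc.of_isClosed_subset hWclopen.1 (hWK.trans interior_subset)
  obtain ⟨T, hT, hmulT⟩ := myExistMulClosure hWc hWclopen.2
  have hT' : T ∩ T⁻¹ ∈ 𝓝 (1 : G) := inter_mem hT (inv_mem_nhds_one G hT)
  obtain ⟨O, hOsub, hOopen, h1O⟩ := mem_nhds_iff.mp hT'
  -- find a nontrivial power of g₀ in O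
  have hm : ∃ m : ℤ, m ≠ 0 ∧ g₀ ^ m ∈ O := by
    by_contra hcon
    push_neg at hcon
    apply hone
    have hsub2 : O ⊆ ({1} : Set G) := by
      have h := hd.open_subset_closure_inter hOopen
      intro x hx
      have hx2 := h hx
      have hsmall : O ∩ ((Subgroup.zpowers g₀ : Subgroup G) : Set G) ⊆ {1} := by
        rintro z ⟨hzO, hz⟩
        obtain ⟨k, rfl⟩ := Subgroup.mem_zpowers_iff.mp hz
        by_cases hk0 : k = 0
        · simp [hk0]
        · exact absurd hzO (hcon k hk0)
      have := (closure_mono hsmall) hx2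
      rwa [closure_singleton] at this
    have hOe : O = ({1} : Set G) := Subset.antisymm hsub2 (singleton_subset_iff.2 h1O)
    rw [← hOe]
    exact hOopen
  obtain ⟨m, hm0, hmO⟩ := hm
  have hmT : g₀ ^ m ∈ T := (hOsub hmO).1
  have hmT' : g₀ ^ (-m) ∈ T := by
    have := (hOsub hmO).2
    rwa [Set.mem_inv, ← zpow_neg] at this
  -- all multiples of m give powers in W
  have hpos : ∀ k : ℕ, g₀ ^ (m * k) ∈ W ∧ g₀ ^ (-(m * k)) ∈ W := by
    intro k
    induction k with
    | zero => simpa using h1W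
    | succ k ih =>
      constructor
      · have he : g₀ ^ (m * ((k : ℤ) + 1)) = g₀ ^ (m * k) * g₀ ^ m := by
          rw [← zpow_add]; ring_nf
        rw [show ((k + 1 : ℕ) : ℤ) = (k : ℤ) + 1 by push_cast; ring, he]
        exact hmulT (Set.mul_mem_mul ih.1 hmT)
      · have he : g₀ ^ (-(m * ((k : ℤ) + 1))) = g₀ ^ (-(m * k)) * g₀ ^ (-m) := by
          rw [← zpow_add]; ring_nf
        rw [show ((k + 1 : ℕ) : ℤ) = (k : ℤ) + 1 by push_cast; ring, he]
        exact hmulT (Set.mul_mem_mul ih.2 hmT')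
  have hWkZ : ∀ k : ℤ, g₀ ^ (m * k) ∈ W := by
    intro k
    rcases le_or_gt 0 k with hk | hk
    · have := (hpos k.toNat).1
      rwa [Int.toNat_of_nonneg hk] at this
    · have := (hpos (-k).toNat).2
      rw [Int.toNat_of_nonneg (by omega : (0:ℤ) ≤ -k)] at this
      have he : m * k = -(m * -k) := by ring
      rwa [he]
  have hWk : ∀ k : ℤ, g₀ ^ ((m.natAbs : ℤ) * k) ∈ W := by
    intro k
    have h3 : (m.natAbs : ℤ) = m ∨ (m.natAbs : ℤ) = -m := by omega
    rcases h3 with h3 | h3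
    · rw [h3]; exact hWkZ k
    · rw [h3]
      have he : -m * k = m * (-k) := by ring
      rw [he]; exact hWkZ (-k)
  have hmabs : 0 < (m.natAbs : ℤ) := by
    have : m.natAbs ≠ 0 := Int.natAbs_ne_zero.mpr hm0
    omega
  -- ⟨g₀⟩ is covered by finitely many translates of W
  set bigU : Set G := ⋃ j ∈ Finset.range m.natAbs, (fun w => g₀ ^ (j : ℤ) * w) '' W with hbigU
  have hcover : ((Subgroup.zpowers g₀ : Subgroup G) : Set G) ⊆ bigU := by
    rintro x hx
    obtain ⟨t, rfl⟩ := Subgroup.mem_zpowers_iff.mp hx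
    set b : ℤ := (m.natAbs : ℤ)
    have hr0 : 0 ≤ t % b := Int.emod_nonneg t (by omega)
    have hrb : t % b < b := Int.emod_lt_of_pos t hmabs
    have hj : (t % b).toNat ∈ Finset.range m.natAbs := Finset.mem_range.mpr (by omega)
    refine Set.mem_biUnion hj ⟨g₀ ^ (b * (t / b)), hWk (t / b), ?_⟩
    show g₀ ^ (((t % b).toNat : ℤ)) * g₀ ^ (b * (t / b)) = g₀ ^ t
    rw [← zpow_add]
    congr 1
    rw [Int.toNat_of_nonneg hr0]
    exact Int.emod_add_mul_ediv t b
  have hcompact : IsCompact bigU :=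
    (Finset.range m.natAbs).finite_toSet.isCompact_biUnion
      (fun j _ => hWc.image (continuous_mul_left _))
  have hclosed : IsClosed bigU :=
    (Finset.range m.natAbs).finite_toSet.isClosed_biUnion
      (fun j _ => (hWc.image (continuous_mul_left _)).isClosed)
  have huniv : (Set.univ : Set G) ⊆ bigU := by
    intro x _
    have hx := hd x
    have := (closure_mono hcover) hx
    rwa [hclosed.closure_eq] at this
  exact ⟨(Set.eq_univ_of_univ_subset huniv) ▸ hcompact⟩
end MonoAux

open Set Filter Topology Pointwise

section Compact
variable {G : Type*} [Group G] [TopologicalSpace G] [IsTopologicalGroup G]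

lemma myCompactCase [CompactSpace G] [T2Space G] [TotallyDisconnectedSpace G]
    (comm : ∀ a b : G, a * b = b * a) {g₀ : G}
    (hd : Dense ((Subgroup.zpowers g₀ : Subgroup G) : Set G)) (N : Subgroup G) :
    ∃ g : G, closure (N : Set G) = closure ((Subgroup.zpowers g : Subgroup G) : Set G) := by
  classical
  have hnormal : ∀ K : Subgroup G, K.Normal := by
    intro K
    refine ⟨fun n hn g => ?_⟩
    have : g * n * g⁻¹ = n := by rw [comm g n, mul_assoc, mul_inv_cancel, mul_one]
    rwa [this]
  have hbasis : ∀ O : Set G, IsOpen O → (1 : G) ∈ O →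
      ∃ U : OpenSubgroup G, (U : Set G) ⊆ O := by
    intro O hO h1
    obtain ⟨V, hVc, h1V, hVO⟩ := compact_exists_isClopen_in_isOpen hO h1
    obtain ⟨U, hU⟩ := IsTopologicalGroup.exist_openSubgroup_sub_clopen_nhds_of_one hVc h1V
    exact ⟨U, hU.trans hVO⟩
  set H : Subgroup G := N.topologicalClosure with hH
  have hHcl : IsClosed (H : Set G) := N.isClosed_topologicalClosure
  -- the sets S U
  set S : OpenSubgroup G → Set G :=
    fun U => {x : G | x ∈ H ∧ ∀ y ∈ H, ∃ n : ℤ, y⁻¹ * x ^ n ∈ U} with hS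
  have hSne : ∀ U : OpenSubgroup G, (S U).Nonempty := by
    intro U
    haveI := hnormal U.1
    have hcyc : IsCyclic (G ⧸ U.1) := by
      refine ⟨⟨QuotientGroup.mk g₀, fun y => ?_⟩⟩
      obtain ⟨x, rfl⟩ := QuotientGroup.mk'_surjective U.1 y
      have hopen : IsOpen (x • (U : Set G)) := U.isOpen.smul x
      have hne : (x • (U : Set G)).Nonempty := ⟨x, 1, U.one_mem, mul_one x⟩
      obtain ⟨z, hz, hzx⟩ := hd.exists_mem_open hopen hne
      obtain ⟨n, rfl⟩ := Subgroup.mem_zpowers_iff.mp hz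
      obtain ⟨u, hu, huz⟩ := hzx
      refine ⟨n, ?_⟩
      have : (g₀ ^ n)⁻¹ * x ∈ U.1 := by
        have : x⁻¹ * (g₀ ^ n) = u := by
          rw [← huz]; simp [smul_eq_mul, ← mul_assoc]
        have hmem : x⁻¹ * g₀ ^ n ∈ U.1 := this ▸ hu
        have := U.1.inv_mem hmem
        simpa [mul_inv_rev] using this
      simpa [QuotientGroup.mk'_apply, ← QuotientGroup.mk_zpow] using (QuotientGroup.eq).mpr this
    haveI := hcyc
    obtain ⟨⟨c, hc⟩, hgen⟩ := IsCyclic.exists_generator (α := ↥(H.map (QuotientGroup.mk' U.1)))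
    obtain ⟨x, hxH, hxc⟩ := hc
    refine ⟨x, hxH, fun y hy => ?_⟩
    obtain ⟨n, hn⟩ := hgen ⟨QuotientGroup.mk' U.1 y, ⟨y, hy, rfl⟩⟩
    have hval : QuotientGroup.mk' U.1 x ^ n = QuotientGroup.mk' U.1 y := by
      have := congrArg Subtype.val hn
      simpa [hxc] using this
    have : (x ^ n)⁻¹ * y ∈ U.1 := by
      rw [← map_zpow] at hval
      exact (QuotientGroup.eq).mp (by simpa [QuotientGroup.mk'_apply] using hval)
    refine ⟨n, ?_⟩
    have := U.1.inv_mem this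
    simpa [mul_inv_rev] using this
  have hScl : ∀ U : OpenSubgroup G, IsClosed (S U) := by
    intro U
    have hrw : S U = (H : Set G) ∩ ⋂ y ∈ (H : Set G), {x : G | ∃ n : ℤ, y⁻¹ * x ^ n ∈ U.1} := by
      ext x
      simp only [hS, Set.mem_setOf_eq, Set.mem_inter_iff, Set.mem_iInter, SetLike.mem_coe]
      tauto
    rw [hrw]
    refine hHcl.inter (isClosed_biInter fun y _ => ?_)
    rw [← isOpen_compl_iff, isOpen_iff_forall_mem_open]
    intro x hx
    refine ⟨x • (U : Set G), ?_, U.isOpen.smul x, ⟨1, U.one_mem, mul_one x⟩⟩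
    rintro z ⟨u, hu, rfl⟩ ⟨n, hn⟩
    apply hx
    refine ⟨n, ?_⟩
    have hzp : (x * u) ^ n = x ^ n * u ^ n := (Commute.mul_zpow (comm x u) n)
    have : y⁻¹ * (x * u) ^ n * (u ^ n)⁻¹ ∈ U.1 :=
      U.1.mul_mem hn (U.1.inv_mem (U.1.zpow_mem hu n))
    rwa [hzp, mul_assoc, mul_assoc, mul_inv_cancel, mul_one] at this
  have hdir : Directed (· ⊇ ·) S := by
    intro U V
    refine ⟨U ⊓ V, fun x hx => ⟨hx.1, fun y hy => ?_⟩, fun x hx => ⟨hx.1, fun y hy => ?_⟩⟩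
    · obtain ⟨n, hn⟩ := hx.2 y hy
      exact ⟨n, hn.1⟩
    · obtain ⟨n, hn⟩ := hx.2 y hy
      exact ⟨n, hn.2⟩
  haveI : Nonempty (OpenSubgroup G) := ⟨⊤⟩
  obtain ⟨g, hg⟩ := IsCompact.nonempty_iInter_of_directed_nonempty_isCompact_isClosed S hdir hSne
    (fun U => (hScl U).isCompact) hScl
  rw [Set.mem_iInter] at hg
  have hgH : g ∈ H := (hg ⊤).1
  refine ⟨g, Set.Subset.antisymm ?_ ?_⟩
  · -- closure N ⊆ closure (zpowers g)
    have : (H : Set G) ⊆ closure ((Subgroup.zpowers g : Subgroup G) : Set G) := by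
      intro y hy
      rw [mem_closure_iff]
      intro O hO hyO
      have h1 : (1 : G) ∈ y⁻¹ • O := ⟨y, hyO, inv_mul_cancel y⟩
      obtain ⟨U, hU⟩ := hbasis (y⁻¹ • O) (hO.smul y⁻¹) h1
      obtain ⟨n, hn⟩ := (hg U).2 y hy
      obtain ⟨b, hbO, hb⟩ := hU hn
      have : b = g ^ n := by
        have := hb
        simp only [smul_eq_mul] at this
        exact mul_left_cancel this
      exact ⟨g ^ n, this ▸ hbO, Subgroup.mem_zpowers_iff.mpr ⟨n, rfl⟩⟩
    rw [← Subgroup.topologicalClosure_coe, ← hH]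
    exact this
  · have hsub : ((Subgroup.zpowers g : Subgroup G) : Set G) ⊆ closure (N : Set G) := by
      rw [← Subgroup.topologicalClosure_coe, ← hH]
      exact SetLike.coe_subset_coe.mpr (Subgroup.zpowers_le.mpr hgH)
    exact closure_minimal hsub isClosed_closure
end Compact

/-- A locally compact Hausdorff totally disconnected monothetic topological group is
inductively monothetic. -/
theorem stmt1 {G : Type*} [Group G] [TopologicalSpace G] [IsTopologicalGroup G]
    [LocallyCompactSpace G] [T2Space G] [TotallyDisconnectedSpace G]
    (h : ∃ g : G, Dense ((Subgroup.zpowers g : Subgroup G) : Set G)) :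
    InductivelyMonothetic G := by
  obtain ⟨g₀, hd⟩ := h
  intro F
  by_cases hone : IsOpen ({1} : Set G)
  · -- discrete case
    haveI : DiscreteTopology G := discreteTopology_of_isOpen_singleton_one hone
    haveI : IsCyclic G := by
      refine ⟨⟨g₀, fun x => ?_⟩⟩
      have := hd x
      rwa [(isClosed_discrete _).closure_eq, SetLike.mem_coe] at this
    obtain ⟨⟨g, hgmem⟩, hgen⟩ :=
      IsCyclic.exists_generator (α := ↥(Subgroup.closure (F : Set G)))
    have heq : Subgroup.closure (F : Set G) = Subgroup.zpowers g := by
      refine le_antisymm (fun x hx => ?_) (Subgroup.zpowers_le.mpr hgmem)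
      obtain ⟨n, hn⟩ := hgen ⟨x, hx⟩
      have := congrArg Subtype.val hn
      simp only [SubgroupClass.coe_zpow] at this
      exact Subgroup.mem_zpowers_iff.mpr ⟨n, this⟩
    exact ⟨g, by rw [heq]⟩
  · haveI : CompactSpace G := stmt1Dichot hd hone
    exact myCompactCase (myMulComm hd) hd (Subgroup.closure (F : Set G))
end

section
/- Let S be a set of prime numbers and for each prime p let n_p be a natural number. Consider the topological group G = ∏_p G_p, the product over all primes p with the product topology, where G_p is the additive group ℤ_p of p-adic integers (with its natural compact topology) if p ∈ S, and G_p is the finite discrete cyclic group ℤ/p^{n_p}ℤ if p ∉ S. Then G is monothetic: there exists g ∈ G whose cyclic subgroup is dense in G. -/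
instance (p : Nat.Primes) : Fact (Nat.Prime (p : ℕ)) := ⟨p.2⟩

/-- Let `S` be a set of primes and `n p` a natural number for each prime `p`. The product
over all primes `p` of the groups `G p`, where `G p` is (topologically isomorphic to) the
additive group `ℤ_p` of `p`-adic integers if `p ∈ S` and the finite discrete cyclic group
`ℤ/p^{n p}ℤ` if `p ∉ S`, is monothetic: some element generates a dense cyclic subgroup. -/
theorem stmt3 (S : Set Nat.Primes) (n : Nat.Primes → ℕ)
    (A : Nat.Primes → Type*) [∀ p, AddCommGroup (A p)] [∀ p, TopologicalSpace (A p)]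
    [∀ p, IsTopologicalAddGroup (A p)]
    (hS : ∀ p ∈ S, ∃ e : A p ≃+ ℤ_[(p : ℕ)], Continuous e ∧ Continuous e.symm)
    (hS' : ∀ p ∉ S, DiscreteTopology (A p) ∧ Nonempty (A p ≃+ ZMod ((p : ℕ) ^ n p))) :
    ∃ g : (∀ p, A p), Dense ((AddSubgroup.zmultiples g : AddSubgroup (∀ p, A p)) : Set (∀ p, A p)) := by
  classical
  choose e he he' using hS
  have f : ∀ p, p ∉ S → (A p ≃+ ZMod ((p : ℕ) ^ n p)) := fun p h => (hS' p h).2.some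
  set g : ∀ p, A p := fun p => if h : p ∈ S then (e p h).symm 1 else (f p h).symm 1 with hgdef
  refine ⟨g, ?_⟩
  have hbasis := isTopologicalBasis_pi
    (fun p : Nat.Primes => TopologicalSpace.isTopologicalBasis_opens (α := A p))
  rw [hbasis.dense_iff]
  rintro o ⟨U, F, hU, rfl⟩ ⟨x, hx⟩
  rw [Set.mem_pi] at hx
  have key : ∀ p : Nat.Primes, ∃ (c m : ℕ), ∀ k : ℕ,
      k ≡ c [MOD (p : ℕ) ^ m] → p ∈ F → k • g p ∈ U p := by
    intro p
    by_cases hpF : p ∈ F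
    swap
    · exact ⟨0, 0, fun k _ h => absurd h hpF⟩
    by_cases hp : p ∈ S
    · have hV : IsOpen ((e p hp).symm ⁻¹' U p) := (hU p hpF).preimage (he' p hp)
      have hxV : (e p hp) (x p) ∈ (e p hp).symm ⁻¹' U p := by
        simpa using hx p hpF
      obtain ⟨ε, hε, hball⟩ := Metric.isOpen_iff.1 hV _ hxV
      obtain ⟨c, hc⟩ := (PadicInt.denseRange_natCast (p := (p : ℕ))).exists_dist_lt
        ((e p hp) (x p)) hε
      obtain ⟨m, hm⟩ : ∃ m : ℕ, ((p : ℕ) : ℝ) ^ (-(m : ℤ)) < ε := by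
        obtain ⟨m, hm⟩ := exists_pow_lt_of_lt_one hε
          (inv_lt_one_of_one_lt₀ (by exact_mod_cast p.2.one_lt) : ((p : ℕ) : ℝ)⁻¹ < 1)
        exact ⟨m, by rwa [zpow_neg, zpow_natCast, ← inv_pow]⟩
      refine ⟨c, m, fun k hk _ => ?_⟩
      have hgp : g p = (e p hp).symm 1 := dif_pos hp
      have h1 : k • g p = (e p hp).symm ((k : ℤ_[(p : ℕ)])) := by
        rw [hgp, ← map_nsmul, nsmul_eq_mul, mul_one]
      have hdvd : ((p : ℕ) ^ m : ℤ) ∣ (k : ℤ) - (c : ℤ) := by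
        exact_mod_cast (Nat.ModEq.dvd hk.symm)
      have hnorm1 : ‖(Int.cast ((k : ℤ) - (c : ℤ)) : ℤ_[(p : ℕ)])‖ ≤ ((p : ℕ) : ℝ) ^ (-(m : ℤ)) := by
        rw [PadicInt.norm_int_le_pow_iff_dvd]
        exact_mod_cast hdvd
      have hdist : dist ((k : ℤ_[(p : ℕ)])) ((e p hp) (x p)) < ε := by
        rw [dist_eq_norm]
        have : ((k : ℤ_[(p : ℕ)])) - (e p hp) (x p) =
            (Int.cast ((k : ℤ) - (c : ℤ)) : ℤ_[(p : ℕ)]) + ((c : ℤ_[(p : ℕ)]) - (e p hp) (x p)) := by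
          push_cast; ring
        rw [this]
        refine lt_of_le_of_lt (PadicInt.nonarchimedean _ _) (max_lt (lt_of_le_of_lt hnorm1 hm) ?_)
        rw [← dist_eq_norm]
        exact (dist_comm ((e p hp) (x p)) (c : ℤ_[(p : ℕ)])) ▸ hc
      rw [h1]
      exact hball (Metric.mem_ball.2 hdist)
    · haveI : NeZero ((p : ℕ) ^ n p) := ⟨pow_ne_zero _ p.2.ne_zero⟩
      refine ⟨((f p hp) (x p)).val, n p, fun k hk _ => ?_⟩
      have hgp : g p = (f p hp).symm 1 := dif_neg hp
      have h1 : k • g p = (f p hp).symm ((k : ZMod ((p : ℕ) ^ n p))) := by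
        rw [hgp, ← map_nsmul, nsmul_eq_mul, mul_one]
      have h2 : (k : ZMod ((p : ℕ) ^ n p)) = (f p hp) (x p) := by
        rw [(ZMod.natCast_eq_natCast_iff _ _ _).2 hk, ZMod.natCast_rightInverse]
      rw [h1, h2, AddEquiv.symm_apply_apply]
      exact hx p hpF
  choose c m hcm using key
  have hcop : Set.Pairwise (F : Set Nat.Primes)
      (Function.onFun Nat.Coprime fun p : Nat.Primes => (p : ℕ) ^ m p) := by
    intro p _ q _ hpq
    exact ((Nat.coprime_primes p.2 q.2).2 fun h => hpq (Subtype.ext h)).pow _ _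
  obtain ⟨k, hk⟩ := Nat.chineseRemainderOfFinset c (fun p : Nat.Primes => (p : ℕ) ^ m p) F
    (fun p _ => pow_ne_zero _ p.2.ne_zero) hcop
  refine ⟨(k : ℕ) • g, Set.mem_pi.2 fun p hp => ?_, ?_⟩
  · exact hcm p _ (hk p hp) hp
  · exact ⟨(k : ℤ), by simp [natCast_zsmul]⟩
end

section
/- Let G be a locally compact Hausdorff topological group with a compact open normal subgroup A such that the (discrete) quotient group G/A is isomorphic to an infinite subgroup of the additive group ℚ of rational numbers. Then G contains a discrete closed subgroup H with A ∩ H = {1} and A·H = G; in particular the quotient map G → G/A restricts to an isomorphism of H onto G/A and G is a semidirect product of A and H. -/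
lemma rat_locally_cyclic (a b : ℚ) :
    ∃ (c : ℚ) (u v : ℤ), c = u • a + v • b ∧
      a ∈ AddSubgroup.zmultiples c ∧ b ∈ AddSubgroup.zmultiples c := by
  by_cases hab : a = 0 ∧ b = 0
  · exact ⟨0, 0, 0, by simp [hab.1, hab.2], by simp [hab.1], by simp [hab.2]⟩
  · set p : ℤ := a.num * b.den with hp
    set r : ℤ := b.num * a.den with hr
    set d : ℚ := (a.den : ℚ) * (b.den : ℚ) with hd
    have hda : (a.den : ℚ) ≠ 0 := Nat.cast_ne_zero.mpr (Rat.den_ne_zero a)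
    have hdb : (b.den : ℚ) ≠ 0 := Nat.cast_ne_zero.mpr (Rat.den_ne_zero b)
    have hd0 : d ≠ 0 := mul_ne_zero hda hdb
    have ha' : a = (p : ℚ) / d := by
      rw [hp, hd]; push_cast
      rw [mul_div_mul_right _ _ hdb]
      exact (Rat.num_div_den a).symm
    have hb' : b = (r : ℚ) / d := by
      rw [hr, hd]; push_cast
      rw [mul_comm ((a.den : ℚ)) ((b.den : ℚ)), mul_div_mul_right _ _ hda]
      exact (Rat.num_div_den b).symm
    set g : ℤ := (Int.gcd p r : ℤ) with hg
    have hgpr : (g : ℤ) = p * Int.gcdA p r + r * Int.gcdB p r := Int.gcd_eq_gcd_ab p r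
    have hg0 : g ≠ 0 := by
      rw [hg]
      intro h
      have hpr := Int.gcd_eq_zero_iff.mp (by exact_mod_cast h)
      rcases hpr with ⟨hp0, hr0⟩
      apply hab
      constructor
      · rw [ha', hp0]; simp
      · rw [hb', hr0]; simp
    refine ⟨(g : ℚ) / d, Int.gcdA p r, Int.gcdB p r, ?_, ?_, ?_⟩
    · rw [ha', hb']
      push_cast [hgpr]
      field_simp
      ring_nf
      rw [mul_inv_cancel_right₀ hd0, mul_inv_cancel_right₀ hd0]
    · obtain ⟨k, hk⟩ : (g : ℤ) ∣ p := Int.gcd_dvd_left p r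
      refine ⟨k, ?_⟩
      rw [ha', hk]
      push_cast
      field_simp
      ring_nf
      rw [mul_comm d, mul_inv_cancel_right₀ hd0]
    · obtain ⟨k, hk⟩ : (g : ℤ) ∣ r := Int.gcd_dvd_right p r
      refine ⟨k, ?_⟩
      rw [hb', hk]
      push_cast
      field_simp
      ring_nf
      rw [mul_comm d, mul_inv_cancel_right₀ hd0]


/-- Let `G` be a locally compact Hausdorff topological group with a compact open normal
subgroup `A` such that the quotient `G/A` is isomorphic to an infinite subgroup of `ℚ`.
Then `G` contains a discrete closed subgroup `H` with `A ∩ H = {1}` and `A·H = G`; in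
particular the quotient map restricts to an isomorphism of `H` onto `G/A`, so `G` is a
semidirect product of `A` and `H`. -/
theorem stmt6 {G : Type*} [Group G] [TopologicalSpace G] [IsTopologicalGroup G]
    [LocallyCompactSpace G] [T2Space G]
    (A : Subgroup G) [A.Normal] (hA_compact : IsCompact (A : Set G))
    (hA_open : IsOpen (A : Set G))
    (hQ : ∃ S : AddSubgroup ℚ, (S : Set ℚ).Infinite ∧
      Nonempty (G ⧸ A ≃* Multiplicative S)) :
    ∃ H : Subgroup G, IsClosed (H : Set G) ∧ DiscreteTopology H ∧
      A ⊓ H = ⊥ ∧ (∀ g : G, ∃ a ∈ A, ∃ h ∈ H, g = a * h) ∧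
      Function.Bijective (fun h : H => (QuotientGroup.mk (h : G) : G ⧸ A)) := by
  obtain ⟨S, hSinf, ⟨φ⟩⟩ := hQ
  set π : G →* Multiplicative S := φ.toMonoidHom.comp (QuotientGroup.mk' A) with hπ
  have hπ_surj : Function.Surjective π :=
    φ.surjective.comp (QuotientGroup.mk'_surjective A)
  have hπ_ker : ∀ g : G, π g = 1 ↔ g ∈ A := by
    intro g
    have hrfl : π g = φ ((QuotientGroup.mk' A) g) := rfl
    constructor
    · intro h
      have h2 : φ ((QuotientGroup.mk' A) g) = φ 1 := by rw [map_one, ← hrfl]; exact h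
      exact (QuotientGroup.eq_one_iff g).mp (φ.injective h2)
    · intro h
      have h2 : (QuotientGroup.mk' A) g = 1 := (QuotientGroup.eq_one_iff g).mpr h
      rw [hrfl, h2, map_one]
  haveI : Nonempty S := ⟨⟨0, S.zero_mem⟩⟩
  obtain ⟨e, he⟩ := exists_surjective_nat S
  obtain ⟨x0, hx0⟩ := (hSinf.diff (Set.finite_singleton 0)).nonempty
  -- the recursive step producing the chain of cyclic subgroups
  have step : ∀ x : {x : ℚ // x ∈ S ∧ x ≠ 0}, ∀ n : ℕ,
      ∃ y : {x : ℚ // x ∈ S ∧ x ≠ 0},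
        (∃ k : ℤ, k • (y : ℚ) = (x : ℚ)) ∧ (∃ k : ℤ, k • (y : ℚ) = ((e n : S) : ℚ)) := by
    intro x n
    obtain ⟨c, u, v, hc, hxc, hec⟩ := rat_locally_cyclic x.1 (e n : S)
    have hcS : c ∈ S := hc ▸ S.add_mem (S.zsmul_mem x.2.1 u) (S.zsmul_mem (e n).2 v)
    have hc0 : c ≠ 0 := by
      rintro rfl
      obtain ⟨k, hk⟩ := AddSubgroup.mem_zmultiples_iff.mp hxc
      exact x.2.2 (by simpa using hk.symm)
    exact ⟨⟨c, hcS, hc0⟩, AddSubgroup.mem_zmultiples_iff.mp hxc,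
      AddSubgroup.mem_zmultiples_iff.mp hec⟩
  set q : ℕ → {x : ℚ // x ∈ S ∧ x ≠ 0} :=
    fun n => Nat.rec ⟨x0, hx0.1, fun h => hx0.2 h⟩ (fun n x => (step x n).choose) n with hq
  have hq_succ : ∀ n, (∃ k : ℤ, k • ((q (n+1) : ℚ)) = (q n : ℚ)) ∧
      (∃ k : ℤ, k • ((q (n+1) : ℚ)) = ((e n : S) : ℚ)) := fun n => (step (q n) n).choose_spec
  set m : ℕ → ℤ := fun n => ((hq_succ n).1).choose with hm
  have hm_spec : ∀ n, m n • ((q (n+1) : ℚ)) = (q n : ℚ) := fun n => ((hq_succ n).1).choose_spec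
  -- targets in Multiplicative S and fibers of π
  set t : ℕ → Multiplicative S := fun n => Multiplicative.ofAdd ⟨(q n : ℚ), (q n).2.1⟩ with ht
  have ht_pow : ∀ (k : ℤ) (n : ℕ) (s : S), k • ((q n : ℚ)) = (s : ℚ) →
      (t n) ^ k = Multiplicative.ofAdd s := by
    intro k n s hk
    have : ((t n) ^ k).toAdd = (Multiplicative.ofAdd s).toAdd := by
      rw [toAdd_zpow]
      apply Subtype.ext
      simpa [ht] using hk
    exact Multiplicative.toAdd.injective this
  set X : ℕ → Set G := fun n => π ⁻¹' {t n} with hX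
  have hXmem : ∀ (n : ℕ) (g : G), g ∈ X n ↔ π g = t n := fun n g => Iff.rfl
  have hXne : ∀ n, (X n).Nonempty := fun n => hπ_surj (t n)
  have hX_compact : ∀ n, IsCompact (X n) := by
    intro n
    obtain ⟨g₀, hg₀⟩ := hXne n
    have hcoset : X n = (fun a => g₀ * a) '' (A : Set G) := by
      ext g
      rw [hXmem n g₀] at hg₀
      simp only [hXmem, Set.mem_image, SetLike.mem_coe]
      constructor
      · intro hg
        refine ⟨g₀⁻¹ * g, ?_, by group⟩
        apply (hπ_ker _).mp
        rw [map_mul, map_inv, hg₀, hg]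
        group
      · rintro ⟨a, ha, rfl⟩
        rw [map_mul, (hπ_ker a).mpr ha, mul_one]
        exact hg₀
    rw [hcoset]
    exact hA_compact.image (continuous_mul_left g₀)
  have hX_closed : ∀ n, IsClosed (X n) := fun n => (hX_compact n).isClosed
  -- a compatible system of lifts via compactness
  have key : ∃ f : ℕ → G, (∀ n, f n ∈ X n) ∧ ∀ n, (f (n+1)) ^ (m n) = f n := by
    set K : Set (ℕ → G) := Set.pi Set.univ X with hK
    have hK_compact : IsCompact K := isCompact_univ_pi hX_compact
    have hK_closed : IsClosed K := isClosed_set_pi fun n _ => hX_closed n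
    set D : ℕ → Set (ℕ → G) := fun N => {f | ∀ n < N, (f (n+1)) ^ (m n) = f n} with hD
    have hD_closed : ∀ N, IsClosed (D N) := by
      intro N
      have : D N = ⋂ n, ⋂ (_ : n < N), {f : ℕ → G | (f (n+1)) ^ (m n) = f n} := by
        ext f; simp [hD]
      rw [this]
      refine isClosed_iInter fun n => isClosed_iInter fun _ => ?_
      exact isClosed_eq ((continuous_apply (n+1)).zpow _) (continuous_apply n)
    set C : ℕ → Set (ℕ → G) := fun N => K ∩ D N with hC
    have hC_compact : ∀ N, IsCompact (C N) := fun N => hK_compact.inter_right (hD_closed N)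
    have hC_closed : ∀ N, IsClosed (C N) := fun N => hK_closed.inter (hD_closed N)
    have hC_anti : Antitone C := by
      intro M N hMN
      exact Set.inter_subset_inter_right K (fun f hf n hn => hf n (hn.trans_le hMN))
    have hqP : ∀ (j N : ℕ), j ≤ N → (∏ k ∈ Finset.Ico j N, m k) • ((q N : ℚ)) = (q j : ℚ) := by
      intro j N
      induction N with
      | zero => intro h; obtain rfl := Nat.le_zero.mp h; simp
      | succ N ih =>
        intro h
        rcases eq_or_lt_of_le h with rfl | h'
        · simp
        · have hjN : j ≤ N := Nat.lt_succ_iff.mp h'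
          rw [Finset.prod_Ico_succ_top hjN, mul_smul, hm_spec N]
          exact ih hjN
    have hC_ne : ∀ N, (C N).Nonempty := by
      intro N
      set pick : ℕ → G := fun n => (hXne n).choose with hpick
      have hpick_mem : ∀ n, pick n ∈ X n := fun n => (hXne n).choose_spec
      set P : ℕ → ℤ := fun j => ∏ k ∈ Finset.Ico j N, m k with hP
      refine ⟨fun j => if j ≤ N then (pick N) ^ (P j) else pick j, ?_, ?_⟩
      · intro j _
        by_cases hj : j ≤ N
        · simp only [if_pos hj]
          rw [hXmem, map_zpow, (hXmem N (pick N)).mp (hpick_mem N)]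
          exact ht_pow (P j) N ⟨(q j : ℚ), (q j).2.1⟩ (hqP j N hj)
        · simp only [if_neg hj]
          exact hpick_mem j
      · intro n hn
        have hn1 : n + 1 ≤ N := hn
        have hn0 : n ≤ N := Nat.le_of_lt hn
        simp only [if_pos hn1, if_pos hn0]
        rw [← zpow_mul]
        congr 1
        show (∏ k ∈ Finset.Ico (n+1) N, m k) * m n = ∏ k ∈ Finset.Ico n N, m k
        rw [Finset.prod_eq_prod_Ico_succ_bot hn, mul_comm]
    obtain ⟨f, hf⟩ := IsCompact.nonempty_iInter_of_directed_nonempty_isCompact_isClosed C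
      hC_anti.directed_ge hC_ne hC_compact hC_closed
    refine ⟨f, fun n => (Set.mem_iInter.mp hf 0).1 n (Set.mem_univ n),
      fun n => (Set.mem_iInter.mp hf (n+1)).2 n (Nat.lt_succ_self n)⟩
  obtain ⟨f, hfX, hfrel⟩ := key
  have hfπ : ∀ n, π (f n) = t n := fun n => (hXmem n (f n)).mp (hfX n)
  -- the subgroup H
  set Hgrp : Subgroup G := ⨆ n, Subgroup.zpowers (f n) with hHgrp
  have hmono : Monotone fun n => Subgroup.zpowers (f n) := by
    apply monotone_nat_of_le_succ
    intro n
    rw [Subgroup.zpowers_le]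
    exact ⟨m n, hfrel n⟩
  have hmem : ∀ g : G, g ∈ Hgrp ↔ ∃ (n : ℕ) (k : ℤ), (f n) ^ k = g := by
    intro g
    rw [hHgrp, Subgroup.mem_iSup_of_directed hmono.directed_le]
    simp [Subgroup.mem_zpowers_iff]
  -- trivial intersection
  have hbot : A ⊓ Hgrp = ⊥ := by
    rw [Subgroup.eq_bot_iff_forall]
    rintro x ⟨hxA, hxH⟩
    obtain ⟨n, k, rfl⟩ := (hmem x).mp hxH
    have h1 : (t n) ^ k = 1 := by
      rw [← hfπ n, ← map_zpow]
      exact (hπ_ker _).mpr hxA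
    have h1' : k • ((⟨(q n : ℚ), (q n).2.1⟩ : S)) = (0 : S) := by
      simpa [ht, toAdd_zpow] using congrArg Multiplicative.toAdd h1
    have h2 : k • ((q n : ℚ)) = 0 := by
      simpa using congrArg Subtype.val h1'
    obtain rfl : k = 0 := by
      rcases smul_eq_zero.mp h2 with h | h
      · exact h
      · exact absurd h (q n).2.2
    simp
  -- decomposition
  have hdecomp : ∀ g : G, ∃ a ∈ A, ∃ h ∈ Hgrp, g = a * h := by
    intro g
    set s : S := Multiplicative.toAdd (π g) with hs
    obtain ⟨n, hn⟩ := he s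
    obtain ⟨k, hk⟩ := (hq_succ n).2
    have hks : k • ((q (n+1) : ℚ)) = (s : ℚ) := by rw [hk, hn]
    have hπh : π ((f (n+1)) ^ k) = π g := by
      rw [map_zpow, hfπ (n+1), ht_pow k (n+1) s hks, hs]
      simp
    refine ⟨g * ((f (n+1)) ^ k)⁻¹, ?_, (f (n+1)) ^ k, (hmem _).mpr ⟨n+1, k, rfl⟩, by group⟩
    apply (hπ_ker _).mp
    rw [map_mul, map_inv, hπh]
    group
  -- discreteness
  haveI hdisc : DiscreteTopology Hgrp := by
    apply discreteTopology_of_isOpen_singleton_one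
    have h1 : ({1} : Set Hgrp) = (Subtype.val) ⁻¹' (A : Set G) := by
      ext x
      simp only [Set.mem_singleton_iff, Set.mem_preimage, SetLike.mem_coe]
      constructor
      · rintro rfl; exact A.one_mem
      · intro hx
        have hx2 : (x : G) ∈ A ⊓ Hgrp := ⟨hx, x.2⟩
        rw [hbot, Subgroup.mem_bot] at hx2
        exact Subtype.ext hx2
    rw [h1]
    exact hA_open.preimage continuous_subtype_val
  refine ⟨Hgrp, Subgroup.isClosed_of_discrete, hdisc, hbot, hdecomp, ?_, ?_⟩
  · -- injective
    intro x y hxy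
    have h1 : (x : G)⁻¹ * y ∈ A := (QuotientGroup.eq).mp hxy
    have h2 : (x : G)⁻¹ * y ∈ Hgrp := Hgrp.mul_mem (Hgrp.inv_mem x.2) y.2
    have h3 : (x : G)⁻¹ * y ∈ A ⊓ Hgrp := ⟨h1, h2⟩
    rw [hbot, Subgroup.mem_bot] at h3
    exact Subtype.ext (inv_mul_eq_one.mp h3).symm |>.symm
  · -- surjective
    intro c
    obtain ⟨g, rfl⟩ := QuotientGroup.mk_surjective c
    obtain ⟨a, ha, h, hh, rfl⟩ := hdecomp g
    refine ⟨⟨h, hh⟩, ?_⟩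
    show (QuotientGroup.mk h : G ⧸ A) = QuotientGroup.mk (a * h)
    have : (QuotientGroup.mk (a * h) : G ⧸ A) = QuotientGroup.mk a * QuotientGroup.mk h := rfl
    rw [this, (QuotientGroup.eq_one_iff a).mpr ha, one_mul]
end

section
/- Let G be a locally compact Hausdorff group, A a closed normal subgroup of G, and H a closed subgroup of G which is σ-compact and contains a subgroup that is compact and open in H, and assume A·H = G. Then the multiplication map μ : A × H → G, μ(a, h) = a·h (where A × H carries the product topology), is a continuous open surjection, and μ(a, h) = 1 if and only if h ∈ A ∩ H and a = h⁻¹. -/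
open Topology Filter Set


/-- Let `G` be a locally compact Hausdorff group, `A` a closed normal subgroup, and `H` a
closed σ-compact subgroup containing a subgroup which is compact and open in `H`, with
`A·H = G`. Then the multiplication map `μ : A × H → G` is a continuous open surjection and
`μ(a, h) = 1` iff `h ∈ A ∩ H` and `a = h⁻¹`. -/
theorem stmt8 {G : Type*} [Group G] [TopologicalSpace G] [IsTopologicalGroup G]
    [LocallyCompactSpace G] [T2Space G]
    (A H : Subgroup G) [A.Normal]
    (hA_closed : IsClosed (A : Set G)) (hH_closed : IsClosed (H : Set G))
    (hH_sigma : SigmaCompactSpace H)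
    (hH_cpt_open : ∃ K : Subgroup G, K ≤ H ∧ IsCompact (K : Set G) ∧
      IsOpen {x : H | (x : G) ∈ K})
    (hAH : ∀ g : G, ∃ a ∈ A, ∃ h ∈ H, g = a * h) :
    Continuous (fun x : A × H => (x.1 : G) * (x.2 : G)) ∧
    IsOpenMap (fun x : A × H => (x.1 : G) * (x.2 : G)) ∧
    Function.Surjective (fun x : A × H => (x.1 : G) * (x.2 : G)) ∧
    ∀ (a : A) (h : H), (a : G) * (h : G) = 1 ↔
      ((h : G) ∈ A ⊓ H ∧ (a : G) = (h : G)⁻¹) := by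
  haveI := hH_sigma
  haveI : IsClosed (A : Set G) := hA_closed
  have hANormal : A.Normal := inferInstance
  -- the restriction of the quotient map to `H`
  set φ : H →* G ⧸ A := (QuotientGroup.mk' A).comp H.subtype with hφ
  have hφcont : Continuous φ := continuous_quot_mk.comp continuous_subtype_val
  have hφsurj : Function.Surjective φ := by
    intro q
    obtain ⟨g, rfl⟩ := QuotientGroup.mk'_surjective A q
    obtain ⟨a, ha, h, hh, rfl⟩ := hAH g
    refine ⟨⟨h, hh⟩, ?_⟩
    have : ((a * h)⁻¹ * h) ∈ A := by
      have : h⁻¹ * a⁻¹ * (h⁻¹)⁻¹ ∈ A := hANormal.conj_mem a⁻¹ (A.inv_mem ha) h⁻¹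
      simpa [mul_assoc, mul_inv_rev] using this
    exact (QuotientGroup.eq.mpr this).symm
  have hφopen : IsOpenMap φ := φ.isOpenMap_of_sigmaCompact hφsurj hφcont
  refine ⟨?_, ?_, ?_, ?_⟩
  · exact (continuous_subtype_val.comp continuous_fst).mul
      (continuous_subtype_val.comp continuous_snd)
  · -- openness
    apply IsOpenMap.of_nhds_le
    rintro ⟨a, h⟩ s hs
    rw [Filter.mem_map, nhds_prod_eq, Filter.mem_prod_iff] at hs
    obtain ⟨t, ht, u, hu, htu⟩ := hs
    obtain ⟨U, hUnhds, hUt⟩ := (mem_nhds_subtype (A : Set G) a t).mp ht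
    obtain ⟨W, hWnhds, hWu⟩ := (mem_nhds_subtype (H : Set G) h u).mp hu
    -- choose small neighborhoods of 1
    have hcont : Continuous fun zp : G × G => (a : G) * h * zp.1 * zp.2⁻¹ * (h : G)⁻¹ := by
      fun_prop
    have hmem : ((fun zp : G × G => (a : G) * h * zp.1 * zp.2⁻¹ * (h : G)⁻¹) ⁻¹' U)
        ∈ 𝓝 ((1 : G), (1 : G)) := by
      apply hcont.continuousAt.preimage_mem_nhds
      simpa using hUnhds
    obtain ⟨S, hS1, P, hP1, hSP⟩ := Filter.mem_prod_iff.mp (by rwa [nhds_prod_eq] at hmem)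
    -- shrink the neighborhood of h in H
    set V₀ : Set H := {v : H | (v : G) ∈ W ∧ ∃ p ∈ P, (v : G) = (h : G) * p} with hV₀
    have hV₀nhds : V₀ ∈ 𝓝 h := by
      have h1 : {v : H | (v : G) ∈ W} ∈ 𝓝 h :=
        (continuous_subtype_val.continuousAt).preimage_mem_nhds hWnhds
      have h2 : {v : H | ∃ p ∈ P, (v : G) = (h : G) * p} ∈ 𝓝 h := by
        have himg : (fun p => (h : G) * p) '' P ∈ 𝓝 ((h : G)) := by
          simpa using (Homeomorph.mulLeft (h : G)).isOpenMap.image_mem_nhds hP1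
        have : {g : G | ∃ p ∈ P, g = (h : G) * p} ∈ 𝓝 (h : G) := by
          refine Filter.mem_of_superset himg ?_
          rintro g ⟨p, hp, rfl⟩
          exact ⟨p, hp, rfl⟩
        exact (continuous_subtype_val.continuousAt).preimage_mem_nhds this
      exact Filter.inter_mem h1 h2
    -- the candidate neighborhood of a*h
    have hπ : Continuous (QuotientGroup.mk : G → G ⧸ A) := continuous_quot_mk
    obtain ⟨V₁, hV₁sub, hV₁open, hV₁mem⟩ := mem_nhds_iff.mp hV₀nhds
    have hkey : ((fun z : G => (a : G) * h * z) '' S) ∩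
        ((QuotientGroup.mk : G → G ⧸ A) ⁻¹' (φ '' V₁)) ∈ 𝓝 ((a : G) * h) := by
      refine Filter.inter_mem ?_ ?_
      · have := (Homeomorph.mulLeft ((a : G) * h)).isOpenMap.image_mem_nhds hS1
        simpa using this
      · refine hπ.continuousAt.preimage_mem_nhds ?_
        refine (hφopen V₁ hV₁open).mem_nhds ?_
        refine ⟨h, hV₁mem, ?_⟩
        have : ((a : G) * h)⁻¹ * h ∈ A := by
          have : (h : G)⁻¹ * (a : G)⁻¹ * ((h : G)⁻¹)⁻¹ ∈ A :=
            hANormal.conj_mem _ (A.inv_mem a.2) _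
          simpa [mul_assoc, mul_inv_rev] using this
        exact QuotientGroup.eq.mpr this |>.symm
    refine Filter.mem_of_superset hkey ?_
    rintro g ⟨⟨z, hz, rfl⟩, hgφ⟩
    obtain ⟨v, hv, hφv⟩ := hgφ
    have hv₀ : v ∈ V₀ := hV₁sub hv
    obtain ⟨hvW, p, hp, hvp⟩ := hv₀
    -- a' := g * v⁻¹ ∈ A
    have hφv' : (QuotientGroup.mk (v : G) : G ⧸ A) =
        QuotientGroup.mk ((a : G) * h * z) := hφv
    have hcoset : (v : G)⁻¹ * ((a : G) * h * z) ∈ A := QuotientGroup.eq.mp hφv'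
    have ha' : ((a : G) * h * z) * (v : G)⁻¹ ∈ A := by
      have hc := hANormal.conj_mem _ hcoset ((a : G) * h * z)
      have heq : ((a : G) * h * z) * ((v : G)⁻¹ * ((a : G) * h * z)) *
          ((a : G) * h * z)⁻¹ = ((a : G) * h * z) * (v : G)⁻¹ := by group
      rwa [heq] at hc
    have ha'U : ((a : G) * h * z) * (v : G)⁻¹ ∈ U := by
      have hU' := hSP (Set.mk_mem_prod hz hp)
      simp only [Set.mem_preimage] at hU'
      have heq : ((a : G) * h * z) * (v : G)⁻¹ =
          (a : G) * h * z * p⁻¹ * (h : G)⁻¹ := by rw [hvp]; group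
      rwa [heq]
    -- conclude
    have hmem_t : (⟨(a : G) * h * z * (v : G)⁻¹, ha'⟩ : A) ∈ t := hUt ha'U
    have hmem_u : v ∈ u := hWu hvW
    have := htu (Set.mk_mem_prod hmem_t hmem_u)
    simpa [mul_assoc] using this
  · -- surjectivity
    intro g
    obtain ⟨a, ha, h, hh, rfl⟩ := hAH g
    exact ⟨(⟨a, ha⟩, ⟨h, hh⟩), rfl⟩
  · -- kernel
    intro a h
    constructor
    · intro hah
      have ha : (a : G) = (h : G)⁻¹ := eq_inv_of_mul_eq_one_left hah
      refine ⟨⟨?_, h.2⟩, ha⟩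
      have : (h : G)⁻¹ ∈ A := ha ▸ a.2
      simpa using A.inv_mem this
    · rintro ⟨-, ha⟩
      rw [ha, inv_mul_cancel]
end

section
/- Let G be a periodic topological group which is topologically quasihamiltonian. Then for every prime p the set G_p of all p-elements of G is a closed normal subgroup of G, and for distinct primes p ≠ q every element of G_p commutes with every element of G_q. -/
/-- For a set `σ` of primes, an element `g` of a topological group `G` is a *σ-element* if
the closure `K` of the cyclic subgroup generated by `g` is compact and every open subgroup
of `K` has finite index all of whose prime divisors belong to `σ`. -/
def IsSigmaElement {G : Type*} [Group G] [TopologicalSpace G] [IsTopologicalGroup G]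
    (σ : Set ℕ) (g : G) : Prop :=
  IsCompact (closure ((Subgroup.zpowers g : Subgroup G) : Set G)) ∧
  ∀ U : Subgroup ((Subgroup.zpowers g).topologicalClosure),
    IsOpen (U : Set ((Subgroup.zpowers g).topologicalClosure)) →
      U.index ≠ 0 ∧ ∀ r : ℕ, r.Prime → r ∣ U.index → r ∈ σ

/-- A topological group is *periodic* if it is locally compact Hausdorff, totally
disconnected, and every element generates a relatively compact cyclic subgroup. -/
def IsPeriodicGroup (G : Type*) [Group G] [TopologicalSpace G] : Prop :=
  LocallyCompactSpace G ∧ T2Space G ∧ TotallyDisconnectedSpace G ∧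
    ∀ g : G, IsCompact (closure ((Subgroup.zpowers g : Subgroup G) : Set G))

/-- A topological group is *Π-procyclic* if it is an abelian periodic group such that for
every prime `p` the set of its `p`-elements is the closure of a cyclic subgroup. -/
def IsPiProcyclic (G : Type*) [Group G] [TopologicalSpace G] [IsTopologicalGroup G] : Prop :=
  (∀ a b : G, a * b = b * a) ∧ IsPeriodicGroup G ∧
    ∀ p : ℕ, p.Prime → ∃ c : G,
      {g : G | IsSigmaElement {p} g} = closure ((Subgroup.zpowers c : Subgroup G) : Set G)

open Pointwise

/-- A topological group `G` is *topologically quasihamiltonian* if for all closed subgroups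
`X` and `Y` the closure of the set `XY` equals the closure of the set `YX`. -/
def TopologicallyQuasihamiltonian (G : Type*) [Group G] [TopologicalSpace G] : Prop :=
  ∀ X Y : Subgroup G, IsClosed (X : Set G) → IsClosed (Y : Set G) →
    closure ((X : Set G) * (Y : Set G)) = closure ((Y : Set G) * (X : Set G))

section Aux

variable {G : Type*} [Group G] [TopologicalSpace G] [IsTopologicalGroup G]

lemma zpclosure_comm [T2Space G] (g : G) {a b : G}
    (ha : a ∈ (Subgroup.zpowers g).topologicalClosure)
    (hb : b ∈ (Subgroup.zpowers g).topologicalClosure) : a * b = b * a := by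
  have h1 : ∀ c ∈ Subgroup.zpowers g, ∀ d ∈ (Subgroup.zpowers g).topologicalClosure,
      c * d = d * c := by
    intro c hc d hd
    have hd' : d ∈ closure ((Subgroup.zpowers g : Subgroup G) : Set G) := by
      rwa [← Subgroup.topologicalClosure_coe]
    have hcl : IsClosed {x : G | c * x = x * c} :=
      isClosed_eq (continuous_const.mul continuous_id) (continuous_id.mul continuous_const)
    refine hcl.closure_subset_iff.mpr ?_ hd'
    rintro x ⟨m, rfl⟩
    obtain ⟨n, rfl⟩ := hc
    exact (zpow_mul_comm g n m)
  have hcl : IsClosed {x : G | x * b = b * x} :=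
    isClosed_eq (continuous_id.mul continuous_const) (continuous_const.mul continuous_id)
  have ha' : a ∈ closure ((Subgroup.zpowers g : Subgroup G) : Set G) := by
    rwa [← Subgroup.topologicalClosure_coe]
  refine hcl.closure_subset_iff.mpr ?_ ha'
  intro c hc
  exact h1 c hc b hb

lemma sigma_pow_mem [T2Space G] {p : ℕ} (hp : p.Prime) {g : G} (hg : IsSigmaElement {p} g)
    {ξ : G} (hξ : ξ ∈ (Subgroup.zpowers g).topologicalClosure)
    (M : Subgroup G)
    (hM : IsOpen ((M.comap (Subgroup.zpowers g).topologicalClosure.subtype :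
      Subgroup (Subgroup.zpowers g).topologicalClosure) :
        Set (Subgroup.zpowers g).topologicalClosure)) :
    ∃ t : ℕ, ξ ^ p ^ t ∈ M := by
  set C := (Subgroup.zpowers g).topologicalClosure with hC
  set U : Subgroup C := M.comap C.subtype with hU
  obtain ⟨hne, hdvd⟩ := hg.2 U hM
  have hpow : ∃ k, U.index = p ^ k := by
    refine ⟨_, Nat.eq_prime_pow_of_unique_prime_dvd hne ?_⟩
    intro q hq hqdvd
    simpa using hdvd q hq hqdvd
  obtain ⟨k, hk⟩ := hpow
  haveI : U.Normal := by
    constructor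
    intro n hn c
    have hcn : (c * n * c⁻¹ : C) = n := by
      have hcomm : (c : G) * (n : G) = (n : G) * (c : G) := zpclosure_comm g c.2 n.2
      ext
      push_cast
      rw [hcomm]
      group
    rwa [hcn]
  have hmem : (⟨ξ, hξ⟩ : C) ^ U.index ∈ U := Subgroup.pow_index_mem U _
  refine ⟨k, ?_⟩
  rw [← hk]
  rw [hU, Subgroup.mem_comap] at hmem
  have h' := hmem
  simp at h'
  exact h'

end Aux

section VanDantzig

open Set Filter Pointwise Topology

variable {G : Type*} [Group G] [TopologicalSpace G] [IsTopologicalGroup G]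

lemma exist_mul_closure_nhd' {W : Set G} (Wopen : IsOpen W) (Wcpt : IsCompact W) :
    ∃ T ∈ 𝓝 (1 : G), W * T ⊆ W := by
  apply Wcpt.induction_on (p := fun S ↦ ∃ T ∈ 𝓝 (1 : G), S * T ⊆ W)
    ⟨Set.univ, by simp only [univ_mem, empty_mul, empty_subset, and_self]⟩
    (fun _ _ huv ⟨T, hT, mem⟩ ↦ ⟨T, hT, (mul_subset_mul_right huv).trans mem⟩)
    (fun U V ⟨T₁, hT₁, mem1⟩ ⟨T₂, hT₂, mem2⟩ ↦ ⟨T₁ ∩ T₂, inter_mem hT₁ hT₂, by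
      rw [union_mul]
      exact union_subset (mul_subset_mul_left inter_subset_left |>.trans mem1)
        (mul_subset_mul_left inter_subset_right |>.trans mem2)⟩)
  intro x memW
  have : (x, 1) ∈ (fun p : G × G ↦ p.1 * p.2) ⁻¹' W := by simp [memW]
  rcases isOpen_prod_iff.mp (continuous_mul.isOpen_preimage W Wopen) x 1 this with
    ⟨U, V, Uopen, Vopen, xmemU, onememV, prodsub⟩
  have h6 : U * V ⊆ W := mul_subset_iff.mpr (fun _ hx _ hy ↦ prodsub (mk_mem_prod hx hy))
  exact ⟨U ∩ W, ⟨U, Uopen.mem_nhds xmemU, W, fun _ a ↦ a, rfl⟩,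
    V, IsOpen.mem_nhds Vopen onememV, fun _ a ↦ h6 ((mul_subset_mul_right inter_subset_left) a)⟩

/-- Van Dantzig: in a locally compact totally disconnected Hausdorff group, every
neighborhood of `1` contains a compact open subgroup. -/
lemma exists_compact_openSubgroup_subset [LocallyCompactSpace G] [T2Space G]
    [TotallyDisconnectedSpace G] {W : Set G} (hW : W ∈ 𝓝 (1 : G)) :
    ∃ V : Subgroup G, IsOpen (V : Set G) ∧ IsCompact (V : Set G) ∧ (V : Set G) ⊆ W := by
  -- find a compact neighborhood inside W
  obtain ⟨s, hsnhds, hsub, hscpt⟩ := local_compact_nhds hW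
  -- find a clopen neighborhood of 1 inside interior s
  have hbasis := loc_compact_Haus_tot_disc_of_zero_dim (H := G)
  obtain ⟨C, hCclopen, hC1, hCsub⟩ :=
    hbasis.mem_nhds_iff.mp (interior_mem_nhds.mpr hsnhds)
  have hCcpt : IsCompact C :=
    hscpt.of_isClosed_subset hCclopen.1 (hCsub.trans interior_subset)
  have hCopen : IsOpen C := hCclopen.2
  -- build T as in mathlib
  obtain ⟨S, Smemnhds, mulclose⟩ := exist_mul_closure_nhd' hCopen hCcpt
  rcases mem_nhds_iff.mp Smemnhds with ⟨U, UsubS, Uopen, onememU⟩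
  set T := U ∩ U⁻¹ with hT
  have hTnhds : T ∈ 𝓝 (1 : G) := by
    simp [hT, Uopen.mem_nhds onememU, inv_mem_nhds_one]
  have hTinv : T⁻¹ = T := by simp [hT, inter_comm]
  have hTopen : IsOpen T := Uopen.inter Uopen.inv
  have hTmul : C * T ⊆ C :=
    fun a ha ↦ mulclose (mul_subset_mul_left UsubS (mul_subset_mul_left inter_subset_left ha))
  let V : Subgroup G := {
    carrier := ⋃ n, T ^ (n + 1)
    mul_mem' := fun ha hb ↦ by
      rcases mem_iUnion.mp ha with ⟨k, hk⟩
      rcases mem_iUnion.mp hb with ⟨l, hl⟩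
      apply mem_iUnion.mpr
      exact ⟨k + 1 + l, by rw [add_assoc, pow_add]; exact Set.mul_mem_mul hk hl⟩
    one_mem' := mem_iUnion.mpr ⟨0, by simpa using mem_of_mem_nhds hTnhds⟩
    inv_mem' := fun ha ↦ by
      rcases mem_iUnion.mp ha with ⟨k, hk⟩
      apply mem_iUnion.mpr
      refine ⟨k, ?_⟩
      rw [← hTinv]
      simpa only [inv_pow, Set.mem_inv, inv_inv] using hk }
  have hVopen : IsOpen (V : Set G) := by
    refine isOpen_iUnion (fun n ↦ ?_)
    rw [pow_succ]
    exact hTopen.mul_left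
  have mulTpow : ∀ n : ℕ, C * T ^ (n + 1) ⊆ C := by
    intro n
    induction' n with n ih
    · simpa using hTmul
    · rw [pow_succ, ← mul_assoc]
      exact (Set.mul_subset_mul_right ih).trans hTmul
  have hVsubC : (V : Set G) ⊆ C := by
    refine iUnion_subset fun n x hx ↦ ?_
    have : x ∈ C * T ^ (n + 1) := ⟨1, hC1, x, hx, one_mul x⟩
    exact mulTpow n this
  have hVclosed : IsClosed (V : Set G) := V.isClosed_of_isOpen hVopen
  exact ⟨V, hVopen, hCcpt.of_isClosed_subset hVclosed hVsubC,
    hVsubC.trans (hCsub.trans (interior_subset.trans hsub))⟩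

end VanDantzig

section Products

open Pointwise

variable {G : Type*} [Group G] [TopologicalSpace G] [IsTopologicalGroup G]

/-- In a Hausdorff topologically quasihamiltonian group, the product of two compact
subgroups is a compact subgroup. -/
lemma quasih_mul_subgroup [T2Space G] (hqh : TopologicallyQuasihamiltonian G)
    (X Y : Subgroup G) (hXc : IsCompact (X : Set G)) (hYc : IsCompact (Y : Set G)) :
    ∃ K : Subgroup G, (K : Set G) = (X : Set G) * (Y : Set G) ∧ IsCompact (K : Set G) := by
  have hXcl : IsClosed (X : Set G) := hXc.isClosed
  have hYcl : IsClosed (Y : Set G) := hYc.isClosed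
  have hXYc : IsCompact ((X : Set G) * (Y : Set G)) := hXc.mul hYc
  have hYXc : IsCompact ((Y : Set G) * (X : Set G)) := hYc.mul hXc
  have hcomm : (X : Set G) * (Y : Set G) = (Y : Set G) * (X : Set G) := by
    have := hqh X Y hXcl hYcl
    rwa [hXYc.isClosed.closure_eq, hYXc.isClosed.closure_eq] at this
  refine ⟨{
    carrier := (X : Set G) * (Y : Set G)
    one_mem' := ⟨1, one_mem X, 1, one_mem Y, one_mul 1⟩
    mul_mem' := ?_
    inv_mem' := ?_ }, rfl, hXYc⟩
  · rintro a b ⟨x₁, hx₁, y₁, hy₁, rfl⟩ ⟨x₂, hx₂, y₂, hy₂, rfl⟩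
    have : y₁ * x₂ ∈ (Y : Set G) * (X : Set G) := Set.mul_mem_mul hy₁ hx₂
    rw [← hcomm] at this
    obtain ⟨x₃, hx₃, y₃, hy₃, h3⟩ := this
    refine ⟨x₁ * x₃, mul_mem hx₁ hx₃, y₃ * y₂, mul_mem hy₃ hy₂, ?_⟩
    calc x₁ * x₃ * (y₃ * y₂) = x₁ * (x₃ * y₃) * y₂ := by group
    _ = x₁ * (y₁ * x₂) * y₂ := by rw [show x₃ * y₃ = y₁ * x₂ from h3]
    _ = x₁ * y₁ * (x₂ * y₂) := by group
  · rintro a ⟨x, hx, y, hy, rfl⟩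
    have : y⁻¹ * x⁻¹ ∈ (Y : Set G) * (X : Set G) := Set.mul_mem_mul (inv_mem hy) (inv_mem hx)
    rw [← hcomm] at this
    simpa [mul_inv_rev] using this

/-- Inside a compact subgroup `K`, any ambient open subgroup `V` contains (the image of)
an open normal subgroup of `K` of finite index. -/
lemma exists_openNormal_in_compact [T2Space G]
    (K : Subgroup G) (hKc : IsCompact (K : Set G)) (V : Subgroup G)
    (hV : IsOpen (V : Set G)) :
    ∃ N : Subgroup K, N.Normal ∧ IsOpen (N : Set K) ∧
      N.map K.subtype ≤ V ∧ N.index ≠ 0 := by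
  haveI : CompactSpace K := isCompact_iff_compactSpace.mp hKc
  have hWopen : IsOpen ((V.subgroupOf K : Subgroup K) : Set K) :=
    Subgroup.subgroupOf_isOpen K V hV
  have hWclopen : IsClopen ((V.subgroupOf K : Subgroup K) : Set K) :=
    ⟨Subgroup.isClosed_of_isOpen _ hWopen, hWopen⟩
  obtain ⟨H, hH⟩ := IsTopologicalGroup.exist_openNormalSubgroup_sub_clopen_nhds_of_one
    hWclopen (one_mem _)
  refine ⟨H.toSubgroup, H.isNormal', H.isOpen, ?_, ?_⟩
  · rintro x ⟨n, hn, rfl⟩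
    exact hH hn
  · haveI : Finite (K ⧸ H.toSubgroup) :=
      Subgroup.quotient_finite_of_isOpen _ H.isOpen
    exact Subgroup.index_ne_zero_of_finite

end Products

section Criterion

open Pointwise Topology

variable {G : Type*} [Group G] [TopologicalSpace G] [IsTopologicalGroup G]

/-- Criterion: an element whose cyclic closure is compact and which has `p`-power
torsion modulo every open subgroup is a `p`-element. -/
lemma isSigmaElement_of_pow_mem [LocallyCompactSpace G] [T2Space G]
    [TotallyDisconnectedSpace G] {p : ℕ} (hp : p.Prime) (x : G)
    (hC : IsCompact (closure ((Subgroup.zpowers x : Subgroup G) : Set G)))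
    (hpow : ∀ V : Subgroup G, IsOpen (V : Set G) → ∃ t : ℕ, x ^ p ^ t ∈ V) :
    IsSigmaElement {p} x := by
  refine ⟨hC, ?_⟩
  set C := (Subgroup.zpowers x).topologicalClosure with hCdef
  intro U hU
  -- find an ambient open subgroup V whose trace is inside U
  obtain ⟨W, hWopen, hWeq⟩ := isOpen_induced_iff.mp hU
  have h1W : (1 : G) ∈ W := by
    have : ((1 : C) : G) ∈ W := by
      have : (1 : C) ∈ (U : Set C) := U.one_mem
      rw [← hWeq] at this
      exact this
    simpa using this
  obtain ⟨V, hVopen, _, hVsub⟩ := exists_compact_openSubgroup_subset (hWopen.mem_nhds h1W)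
  set V' : Subgroup C := V.comap C.subtype with hV'def
  have hV'le : V' ≤ U := by
    intro v hv
    have : (v : G) ∈ V := hv
    have : (v : G) ∈ W := hVsub this
    have : v ∈ (Subtype.val ⁻¹' W : Set C) := this
    rw [hWeq] at this
    exact this
  have hdvd : U.index ∣ V'.index := Subgroup.index_dvd_of_le hV'le
  -- compute V'.index
  have hV'open : IsOpen (V' : Set C) := by
    rw [hV'def]
    exact Subgroup.subgroupOf_isOpen C V hVopen
  haveI : V'.Normal := by
    constructor
    intro n hn c
    have hcn : (c * n * c⁻¹ : C) = n := by
      have hcomm : (c : G) * (n : G) = (n : G) * (c : G) := zpclosure_comm x c.2 n.2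
      ext; push_cast; rw [hcomm]; group
    rwa [hcn]
  set xt : C := ⟨x, Subgroup.le_topologicalClosure _ (Subgroup.mem_zpowers x)⟩ with hxt
  -- V' ⊔ zpowers xt = ⊤
  have hsup : Subgroup.zpowers xt ⊔ V' = ⊤ := by
    have hopen : IsOpen ((Subgroup.zpowers xt ⊔ V' : Subgroup C) : Set C) :=
      Subgroup.isOpen_mono le_sup_right hV'open
    have hclosed : IsClosed ((Subgroup.zpowers xt ⊔ V' : Subgroup C) : Set C) :=
      Subgroup.isClosed_of_isOpen _ hopen
    rw [eq_top_iff]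
    intro c _
    -- c belongs to closure of zpowers xt within C
    have hdense : closure ((Subgroup.zpowers xt : Subgroup C) : Set C) = Set.univ := by
      have himg : (Subtype.val '' ((Subgroup.zpowers xt : Subgroup C) : Set C)) =
          ((Subgroup.zpowers x : Subgroup G) : Set G) := by
        ext g
        constructor
        · rintro ⟨⟨g', hg'⟩, hmem, rfl⟩
          obtain ⟨n, hn⟩ := hmem
          exact ⟨n, by simpa using congrArg Subtype.val hn⟩
        · rintro ⟨n, rfl⟩
          exact ⟨xt ^ n, ⟨n, rfl⟩, by simp [hxt]⟩
      have hind : closure ((Subgroup.zpowers xt : Subgroup C) : Set C) =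
          Subtype.val ⁻¹' closure (Subtype.val '' ((Subgroup.zpowers xt : Subgroup C) : Set C)) :=
        Topology.IsInducing.subtypeVal.closure_eq_preimage_closure_image _
      rw [hind, himg]
      ext c
      simp only [Set.mem_preimage, Set.mem_univ, iff_true]
      exact c.2
    have : c ∈ closure ((Subgroup.zpowers xt : Subgroup C) : Set C) := by
      rw [hdense]; trivial
    have hsub : closure ((Subgroup.zpowers xt : Subgroup C) : Set C) ⊆
        ((Subgroup.zpowers xt ⊔ V' : Subgroup C) : Set C) :=
      hclosed.closure_subset_iff.mpr (fun a ha => le_sup_left (a := Subgroup.zpowers xt) ha)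
    exact hsub this
  -- quotient is generated by the image of xt
  have hV'index : ∃ s : ℕ, V'.index = p ^ s := by
    set q : C →* C ⧸ V' := QuotientGroup.mk' V' with hq
    have hgen : Subgroup.zpowers (q xt) = ⊤ := by
      rw [eq_top_iff]
      rintro y -
      obtain ⟨c, rfl⟩ := QuotientGroup.mk'_surjective V' y
      have hc : c ∈ Subgroup.zpowers xt ⊔ V' := hsup ▸ Subgroup.mem_top c
      have hc2 : c ∈ ((Subgroup.zpowers xt : Subgroup C) : Set C) * (V' : Set C) := by
        rw [← Subgroup.mul_normal]
        exact hc
      obtain ⟨z, hz, v, hv, rfl⟩ := hc2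
      obtain ⟨n, rfl⟩ := hz
      refine ⟨n, ?_⟩
      have h1 : q v = 1 := (QuotientGroup.eq_one_iff v).mpr hv
      show q xt ^ n = q (xt ^ n * v)
      rw [map_mul, h1, mul_one, map_zpow]
    have hcard : V'.index = orderOf (q xt) := by
      rw [Subgroup.index_eq_card, ← Nat.card_zpowers, hgen]
      exact (Nat.card_congr Subgroup.topEquiv.toEquiv).symm
    obtain ⟨t, hxtV⟩ := hpow V hVopen
    have hxtV' : xt ^ p ^ t ∈ V' := by
      rw [hV'def, Subgroup.mem_comap]
      simpa [hxt] using hxtV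
    have hord : orderOf (q xt) ∣ p ^ t := by
      rw [orderOf_dvd_iff_pow_eq_one, ← map_pow]
      exact (QuotientGroup.eq_one_iff _).mpr hxtV'
    have : V'.index ∣ p ^ t := by rw [hcard]; exact hord
    obtain ⟨s, _, hs⟩ := (Nat.dvd_prime_pow hp).mp this
    exact ⟨s, hs⟩
  obtain ⟨s, hs⟩ := hV'index
  constructor
  · intro h0
    rw [h0] at hdvd
    have : V'.index = 0 := Nat.eq_zero_of_zero_dvd hdvd
    rw [hs] at this
    exact (pow_ne_zero s hp.ne_zero) this
  · intro r hr hrdvd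
    have : r ∣ p ^ s := hs ▸ hrdvd.trans hdvd
    have := hr.dvd_of_dvd_pow this
    simpa using (Nat.prime_dvd_prime_iff_eq hr hp).mp this

end Criterion

section FiniteGroup

open Pointwise

variable {F : Type*} [Group F]

/-- The image of a subgroup `A` in the coset space `F ⧸ B` is equivalent to the
quotient `A ⧸ (B.subgroupOf A)`. -/
noncomputable def imageQuotEquiv (A B : Subgroup F) :
    (A ⧸ (B.subgroupOf A)) ≃ ((QuotientGroup.mk '' (A : Set F)) : Set (F ⧸ B)) := by
  refine Equiv.ofBijective (Quotient.lift
    (fun a : A => (⟨QuotientGroup.mk (a : F), ⟨(a : F), a.2, rfl⟩⟩ :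
      ((QuotientGroup.mk '' (A : Set F)) : Set (F ⧸ B)))) ?_) ⟨?_, ?_⟩
  · intro a b hab
    have h := (QuotientGroup.leftRel_apply).mp hab
    have : (a : F)⁻¹ * (b : F) ∈ B := h
    exact Subtype.ext ((QuotientGroup.eq (s := B)).mpr this)
  · intro u v
    induction u using Quotient.ind
    induction v using Quotient.ind
    intro huv
    rename_i a b
    apply Quotient.sound
    show (QuotientGroup.leftRel (B.subgroupOf A)) a b
    rw [QuotientGroup.leftRel_apply]
    have : (QuotientGroup.mk (a : F) : F ⧸ B) = QuotientGroup.mk (b : F) :=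
      congrArg Subtype.val huv
    exact (QuotientGroup.eq (s := B)).mp this
  · rintro ⟨y, g, hg, rfl⟩
    exact ⟨Quotient.mk _ ⟨g, hg⟩, rfl⟩

/-- The cardinality of a product set of two subgroups divides the product of cardinalities. -/
lemma card_mul_set_dvd (A B : Subgroup F) :
    Nat.card ((A : Set F) * (B : Set F) : Set F) ∣ Nat.card A * Nat.card B := by
  rw [Subgroup.card_mul_eq_card_subgroup_mul_card_quotient B (A : Set F)]
  have h1 : Nat.card ((A : Set F).image (QuotientGroup.mk : F → F ⧸ B)) ∣ Nat.card A := by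
    have he : Nat.card ((A : Set F).image (QuotientGroup.mk : F → F ⧸ B)) =
        Nat.card (A ⧸ (B.subgroupOf A)) := (Nat.card_congr (imageQuotEquiv A B)).symm
    rw [he, Subgroup.card_eq_card_quotient_mul_card_subgroup (B.subgroupOf A)]
    exact Dvd.intro _ rfl
  calc Nat.card B * Nat.card ((A : Set F).image (QuotientGroup.mk : F → F ⧸ B))
      ∣ Nat.card B * Nat.card A := Nat.mul_dvd_mul_left _ h1
  _ = Nat.card A * Nat.card B := mul_comm _ _

end FiniteGroup

section FiniteMain

open Pointwise

variable {F : Type*} [Group F]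

/-- In a finite group covered by a `p`-subgroup and a `q`-subgroup (`p ≠ q`) such that
the relevant conjugate products are subgroups, the given subgroups are normal and
elementwise commute. -/
lemma finite_pq_commute [Finite F] {p q : ℕ} (hp : p.Prime) (hq : q.Prime) (hne : p ≠ q)
    (A B : Subgroup F) (hA : IsPGroup p A) (hB : IsPGroup q B)
    (hcov : (A : Set F) * (B : Set F) = Set.univ)
    (hperm : ∀ f : F, ∃ S : Subgroup F,
      (S : Set F) = (A : Set F) * ((A.map (MulAut.conj f).toMonoidHom : Subgroup F) : Set F))
    (hpermB : ∀ f : F, ∃ S : Subgroup F,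
      (S : Set F) = (B : Set F) * ((B.map (MulAut.conj f).toMonoidHom : Subgroup F) : Set F)) :
    A.Normal ∧ B.Normal ∧ ∀ a ∈ A, ∀ b ∈ B, Commute a b := by
  haveI : Fact p.Prime := ⟨hp⟩
  haveI : Fact q.Prime := ⟨hq⟩
  obtain ⟨α, hα⟩ := IsPGroup.iff_card.mp hA
  obtain ⟨β, hβ⟩ := IsPGroup.iff_card.mp hB
  have hcardF : Nat.card F ∣ p ^ α * q ^ β := by
    have := card_mul_set_dvd A B
    rw [hcov, hα, hβ] at this
    simpa [Nat.card_univ] using this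
  -- normality of a coprime-covering prime-power subgroup
  have hnormal : ∀ (r s : ℕ) (hr : r.Prime) (hs : s.Prime) (hrs : r ≠ s)
      (C : Subgroup F) (hC : IsPGroup r C) (γ δ : ℕ) (hγ : Nat.card C = r ^ γ)
      (hF : Nat.card F ∣ r ^ γ * s ^ δ)
      (hpermC : ∀ f : F, ∃ S : Subgroup F,
        (S : Set F) = (C : Set F) * ((C.map (MulAut.conj f).toMonoidHom : Subgroup F) : Set F)),
      C.Normal := by
    intro r s hr hs hrs C hC γ δ hγ hF hpermC
    haveI : Fact r.Prime := ⟨hr⟩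
    have hconj : ∀ f : F, C.map (MulAut.conj f).toMonoidHom ≤ C := by
      intro f
      obtain ⟨S, hS⟩ := hpermC f
      set C' := C.map (MulAut.conj f).toMonoidHom with hC'
      have hC'card : Nat.card C' = r ^ γ := by
        rw [← hγ]
        exact Nat.card_congr (Subgroup.equivMapOfInjective C _
          (MulAut.conj f).injective).symm.toEquiv
      have hCleS : C ≤ S := by
        intro c hc
        have : c ∈ (S : Set F) := by
          rw [hS]
          exact ⟨c, hc, 1, Subgroup.one_mem _, (mul_one c)⟩
        exact this
      have hC'leS : C' ≤ S := by
        intro c hc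
        have : c ∈ (S : Set F) := by
          rw [hS]
          exact ⟨1, Subgroup.one_mem _, c, hc, (one_mul c)⟩
        exact this
      -- card S is a power of r
      have hScard_dvd : Nat.card S ∣ r ^ γ * r ^ γ := by
        have h := card_mul_set_dvd C C'
        rw [← hS] at h
        rw [hγ, hC'card] at h
        simpa using h
      have hS2 : Nat.card S ∣ r ^ (γ + γ) := by
        rw [pow_add]
        exact hScard_dvd
      obtain ⟨γ', _, hγ'⟩ := (Nat.dvd_prime_pow hr).mp hS2
      -- card S divides card F, hence divides r ^ γ
      have hSF : Nat.card S ∣ Nat.card F := Subgroup.card_subgroup_dvd_card S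
      have hSrs : Nat.card S ∣ r ^ γ * s ^ δ := hSF.trans hF
      have hcop : Nat.Coprime (Nat.card S) (s ^ δ) := by
        rw [hγ']
        exact Nat.Coprime.pow _ _ ((Nat.coprime_primes hr hs).mpr hrs)
      have hSr : Nat.card S ∣ r ^ γ := by
        rw [mul_comm] at hSrs
        exact (Nat.Coprime.dvd_of_dvd_mul_left hcop hSrs)
      have hle : Nat.card S ≤ Nat.card C := by
        rw [hγ]
        exact Nat.le_of_dvd (pow_pos hr.pos γ) hSr
      have hSeqC : C = S := Subgroup.eq_of_le_of_card_ge hCleS hle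
      rw [hSeqC]
      exact hC'leS
    constructor
    intro n hn g
    have := hconj g (Subgroup.mem_map_of_mem _ hn)
    simpa using this
  have hAn : A.Normal := hnormal p q hp hq hne A hA α β hα hcardF hperm
  have hBn : B.Normal := hnormal q p hq hp (Ne.symm hne) B hB β α hβ
    (by rw [mul_comm] at hcardF; exact hcardF) hpermB
  refine ⟨hAn, hBn, ?_⟩
  intro a ha b hb
  have hdisj : Disjoint A B := IsPGroup.disjoint_of_ne p q hne A B hA hB
  exact Subgroup.commute_of_normal_of_disjoint A B hAn hBn hdisj a b ha hb

end FiniteMain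

section Quotients

open Pointwise

variable {G : Type*} [Group G] [TopologicalSpace G] [IsTopologicalGroup G]

lemma comap_map_subtype_open {K : Subgroup G} {N : Subgroup K}
    (hNopen : IsOpen (N : Set K)) {D : Subgroup G} (hDK : D ≤ K) :
    IsOpen (((N.map K.subtype).comap D.subtype : Subgroup D) : Set D) := by
  obtain ⟨O, hO, hOeq⟩ := isOpen_induced_iff.mp hNopen
  have hset : (((N.map K.subtype).comap D.subtype : Subgroup D) : Set D) =
      (Subtype.val ⁻¹' O : Set D) := by
    ext ⟨a, haD⟩
    simp only [Subgroup.coe_comap, Set.mem_preimage, Subgroup.coe_subtype, SetLike.mem_coe]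
    constructor
    · rintro ⟨n, hn, hna⟩
      have : (n : G) ∈ O ↔ n ∈ N := by
        constructor
        · intro h
          have : n ∈ (Subtype.val ⁻¹' O : Set K) := h
          rw [hOeq] at this; exact this
        · intro h
          have : n ∈ (Subtype.val ⁻¹' O : Set K) := by rw [hOeq]; exact h
          exact this
      rw [← hna]
      exact this.mpr hn
    · intro ha
      refine ⟨⟨a, hDK haD⟩, ?_, rfl⟩
      have : (⟨a, hDK haD⟩ : K) ∈ (Subtype.val ⁻¹' O : Set K) := ha
      rw [hOeq] at this
      exact this
  rw [hset]
  exact hO.preimage continuous_subtype_val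

/-- If `g` is a `p`-element lying in a closed subgroup `K` and `N` is an open subgroup of
`K`, then each element of the cyclic closure of `g` has a `p`-power power in `N`. -/
lemma sigma_pow_mem_of_le [T2Space G] {p : ℕ} (hp : p.Prime) {g : G}
    (hg : IsSigmaElement {p} g) {K : Subgroup G} (hKcl : IsClosed (K : Set G)) (hgK : g ∈ K)
    {ξ : G} (hξ : ξ ∈ (Subgroup.zpowers g).topologicalClosure)
    {N : Subgroup K} (hNopen : IsOpen (N : Set K)) :
    ∃ t : ℕ, ξ ^ p ^ t ∈ N.map K.subtype := by
  have hCK : (Subgroup.zpowers g).topologicalClosure ≤ K :=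
    Subgroup.topologicalClosure_minimal _ ((Subgroup.zpowers_le).mpr hgK) hKcl
  exact sigma_pow_mem hp hg hξ (N.map K.subtype) (comap_map_subtype_open hNopen hCK)

lemma orderOf_mk_dvd_pow {K : Subgroup G} {N : Subgroup K} [N.Normal]
    {p t : ℕ} {ξ : G} (hξK : ξ ∈ K)
    (h : ξ ^ p ^ t ∈ N.map K.subtype) :
    orderOf ((QuotientGroup.mk' N) ⟨ξ, hξK⟩) ∣ p ^ t := by
  rw [orderOf_dvd_iff_pow_eq_one, ← map_pow]
  apply (QuotientGroup.eq_one_iff _).mpr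
  obtain ⟨n, hn, hval⟩ := h
  have : n = (⟨ξ, hξK⟩ : K) ^ p ^ t := by
    apply Subtype.ext
    simpa using hval
  rwa [← this]

lemma pow_card_eq_one_of_orderOf_dvd_pow {H : Type*} [Group H] [Finite H]
    {p t : ℕ} (hp : p.Prime) {a : H} (h : orderOf a ∣ p ^ t) :
    a ^ p ^ (Nat.card H) = 1 := by
  obtain ⟨s, hst, hs⟩ := (Nat.dvd_prime_pow hp).mp h
  have h1 : orderOf a ∣ Nat.card H := orderOf_dvd_natCard a
  have h2 : p ^ s ≤ Nat.card H := by
    refine Nat.le_of_dvd ?_ (hs ▸ h1)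
    exact Nat.card_pos
  have h3 : s ≤ Nat.card H := le_trans (le_trans (Nat.le_of_lt (Nat.lt_pow_self (n := s) hp.one_lt)) le_rfl) h2
  rw [← orderOf_dvd_iff_pow_eq_one, hs]
  exact pow_dvd_pow p h3

lemma isPGroup_image [T2Space G] {p : ℕ} (hp : p.Prime) {g : G}
    (hg : IsSigmaElement {p} g) {K : Subgroup G} (hKcl : IsClosed (K : Set G)) (hgK : g ∈ K)
    (N : Subgroup K) [N.Normal] (hNopen : IsOpen (N : Set K)) :
    IsPGroup p ((((Subgroup.zpowers g).topologicalClosure).subgroupOf K).map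
      (QuotientGroup.mk' N)) := by
  intro a
  obtain ⟨ξt, hξt, ha⟩ := a.2
  have hξ : (ξt : G) ∈ (Subgroup.zpowers g).topologicalClosure :=
    (Subgroup.mem_subgroupOf).mp hξt
  obtain ⟨t, ht⟩ := sigma_pow_mem_of_le hp hg hKcl hgK hξ hNopen
  have hord : orderOf ((QuotientGroup.mk' N) ξt) ∣ p ^ t := by
    have := orderOf_mk_dvd_pow (N := N) ξt.2 ht
    simpa using this
  refine ⟨t, ?_⟩
  apply Subtype.ext
  have : ((a : K ⧸ N)) ^ p ^ t = 1 := by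
    rw [← ha]
    exact orderOf_dvd_iff_pow_eq_one.mp hord
  simpa using this

lemma image_cover (X Y K : Subgroup G) (hKset : (K : Set G) = (X : Set G) * (Y : Set G))
    (N : Subgroup K) [N.Normal] :
    (((X.subgroupOf K).map (QuotientGroup.mk' N) : Subgroup (K ⧸ N)) : Set (K ⧸ N)) *
      (((Y.subgroupOf K).map (QuotientGroup.mk' N) : Subgroup (K ⧸ N)) : Set (K ⧸ N)) =
    Set.univ := by
  ext f
  simp only [Set.mem_univ, iff_true]
  obtain ⟨k, rfl⟩ := QuotientGroup.mk'_surjective N f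
  have hk : (k : G) ∈ (X : Set G) * (Y : Set G) := by rw [← hKset]; exact k.2
  obtain ⟨ξ, hξ, η, hη, hmul⟩ := hk
  have hξK : ξ ∈ K := by
    rw [← SetLike.mem_coe, hKset]
    exact ⟨ξ, hξ, 1, Subgroup.one_mem Y, mul_one ξ⟩
  have hηK : η ∈ K := by
    rw [← SetLike.mem_coe, hKset]
    exact ⟨1, Subgroup.one_mem X, η, hη, one_mul η⟩
  have hkdecomp : k = (⟨ξ, hξK⟩ : K) * (⟨η, hηK⟩ : K) := by
    apply Subtype.ext
    simpa using hmul.symm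
  refine ⟨(QuotientGroup.mk' N) ⟨ξ, hξK⟩, ?_, (QuotientGroup.mk' N) ⟨η, hηK⟩, ?_, ?_⟩
  · exact Subgroup.mem_map_of_mem _ ((Subgroup.mem_subgroupOf).mpr hξ)
  · exact Subgroup.mem_map_of_mem _ ((Subgroup.mem_subgroupOf).mpr hη)
  · rw [hkdecomp, map_mul]

end Quotients

section Part2

open Pointwise Topology

variable {G : Type*} [Group G] [TopologicalSpace G] [IsTopologicalGroup G]

lemma coe_topclosure_compact {g : G} (h : IsCompact (closure ((Subgroup.zpowers g : Subgroup G) : Set G))) :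
    IsCompact (((Subgroup.zpowers g).topologicalClosure : Subgroup G) : Set G) := by
  rwa [Subgroup.topologicalClosure_coe]

lemma mem_own_topclosure (g : G) : g ∈ (Subgroup.zpowers g).topologicalClosure :=
  Subgroup.le_topologicalClosure _ (Subgroup.mem_zpowers g)

open scoped commutatorElement in
lemma commute_of_sigma [LocallyCompactSpace G] [T2Space G] [TotallyDisconnectedSpace G]
    (hqh : TopologicallyQuasihamiltonian G)
    {p q : ℕ} (hp : p.Prime) (hq : q.Prime) (hne : p ≠ q)
    {x y : G} (hx : IsSigmaElement {p} x) (hy : IsSigmaElement {q} y) : Commute x y := by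
  set X := (Subgroup.zpowers x).topologicalClosure with hXdef
  set Y := (Subgroup.zpowers y).topologicalClosure with hYdef
  have hXc : IsCompact (X : Set G) := coe_topclosure_compact hx.1
  have hYc : IsCompact (Y : Set G) := coe_topclosure_compact hy.1
  obtain ⟨K, hKset, hKc⟩ := quasih_mul_subgroup hqh X Y hXc hYc
  have hKcl : IsClosed (K : Set G) := hKc.isClosed
  have hxX : x ∈ X := mem_own_topclosure x
  have hyY : y ∈ Y := mem_own_topclosure y
  have hXK : X ≤ K := by
    intro a ha
    rw [← SetLike.mem_coe, hKset]
    exact ⟨a, ha, 1, Subgroup.one_mem Y, mul_one a⟩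
  have hYK : Y ≤ K := by
    intro a ha
    rw [← SetLike.mem_coe, hKset]
    exact ⟨1, Subgroup.one_mem X, a, ha, one_mul a⟩
  have hxK : x ∈ K := hXK hxX
  have hyK : y ∈ K := hYK hyY
  rw [← commutatorElement_eq_one_iff_commute]
  by_contra hcne
  -- choose an open subgroup avoiding the commutator
  have hWnhds : ({⁅x, y⁆}ᶜ : Set G) ∈ 𝓝 (1 : G) :=
    (isOpen_compl_singleton).mem_nhds (by simpa using (Ne.symm hcne))
  obtain ⟨V, hVopen, _, hVsub⟩ := exists_compact_openSubgroup_subset hWnhds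
  obtain ⟨N, hNnormal, hNopen, hNle, hNindex⟩ := exists_openNormal_in_compact K hKc V hVopen
  haveI := hNnormal
  haveI : Finite (K ⧸ N) := by
    apply Nat.finite_of_card_ne_zero
    rwa [← Subgroup.index_eq_card]
  set π := QuotientGroup.mk' N with hπdef
  set A := (X.subgroupOf K).map π with hAdef
  set B := (Y.subgroupOf K).map π with hBdef
  have hA : IsPGroup p A := isPGroup_image hp hx hKcl hxK N hNopen
  have hB : IsPGroup q B := isPGroup_image hq hy hKcl hyK N hNopen
  have hcov : (A : Set (K ⧸ N)) * (B : Set (K ⧸ N)) = Set.univ :=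
    image_cover X Y K hKset N
  -- permutability of conjugates
  have hperm : ∀ (Z : Subgroup G), Z ≤ K → IsCompact (Z : Set G) →
      ∀ f : K ⧸ N, ∃ S : Subgroup (K ⧸ N),
      (S : Set (K ⧸ N)) = (((Z.subgroupOf K).map π : Subgroup (K ⧸ N)) : Set (K ⧸ N)) *
        ((((Z.subgroupOf K).map π).map (MulAut.conj f).toMonoidHom : Subgroup (K ⧸ N)) :
          Set (K ⧸ N)) := by
    intro Z hZK hZc f
    obtain ⟨kt, rfl⟩ := QuotientGroup.mk'_surjective N f
    set k : G := (kt : G) with hkdef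
    have hkK : k ∈ K := kt.2
    set Zk := Z.map (MulAut.conj k).toMonoidHom with hZkdef
    have hZkc : IsCompact (Zk : Set G) := by
      have : (Zk : Set G) = (fun g => k * g * k⁻¹) '' (Z : Set G) := by
        rw [hZkdef]
        ext a
        simp [Subgroup.mem_map, Set.mem_image, MulAut.conj_apply]
      rw [this]
      exact hZc.image ((continuous_const.mul continuous_id).mul continuous_const)
    obtain ⟨D, hDset, hDc⟩ := quasih_mul_subgroup hqh Z Zk hZc hZkc
    have hZkK : Zk ≤ K := by
      rintro a ⟨z, hz, rfl⟩
      exact K.mul_mem (K.mul_mem hkK (hZK hz)) (K.inv_mem hkK)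
    have hDK : D ≤ K := by
      intro d hd
      have : (d : G) ∈ (Z : Set G) * (Zk : Set G) := by rw [← hDset]; exact hd
      obtain ⟨z, hz, w, hw, rfl⟩ := this
      exact K.mul_mem (hZK hz) (hZkK hw)
    refine ⟨(D.subgroupOf K).map π, ?_⟩
    ext f
    constructor
    · rintro ⟨dt, hdt, rfl⟩
      have hd : (dt : G) ∈ (Z : Set G) * (Zk : Set G) := by
        rw [← hDset]
        exact (Subgroup.mem_subgroupOf).mp hdt
      obtain ⟨z, hz, w, hw, hmul⟩ := hd
      obtain ⟨ζ, hζ, rfl⟩ := hw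
      have hzK : z ∈ K := hZK hz
      have hζK : (ζ : G) ∈ K := hZK hζ
      have hdecomp : dt = (⟨z, hzK⟩ : K) * (kt * ⟨ζ, hζK⟩ * kt⁻¹) := by
        apply Subtype.ext
        push_cast
        rw [← hmul]
        simp [MulAut.conj_apply, hkdef]
      refine ⟨π ⟨z, hzK⟩, Subgroup.mem_map_of_mem _ ((Subgroup.mem_subgroupOf).mpr hz),
        (MulAut.conj (π kt)).toMonoidHom (π ⟨ζ, hζK⟩), ?_, ?_⟩
      · exact Subgroup.mem_map_of_mem _
          (Subgroup.mem_map_of_mem _ ((Subgroup.mem_subgroupOf).mpr hζ))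
      · rw [hdecomp, map_mul]
        simp only [MulAut.conj_apply, map_mul, map_inv]
        rfl
    · rintro ⟨a, ⟨zt, hzt, rfl⟩, b, ⟨b', ⟨ζt, hζt, rfl⟩, rfl⟩, rfl⟩
      have hz : (zt : G) ∈ Z := (Subgroup.mem_subgroupOf).mp hzt
      have hζ : (ζt : G) ∈ Z := (Subgroup.mem_subgroupOf).mp hζt
      have hmemD : ((zt * (kt * ζt * kt⁻¹) : K) : G) ∈ D := by
        have : ((zt * (kt * ζt * kt⁻¹) : K) : G) ∈ (Z : Set G) * (Zk : Set G) := by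
          refine ⟨(zt : G), hz, k * (ζt : G) * k⁻¹, ?_, by push_cast; rw [hkdef]⟩
          exact ⟨(ζt : G), hζ, rfl⟩
        rw [← SetLike.mem_coe, hDset]
        exact this
      refine ⟨zt * (kt * ζt * kt⁻¹), (Subgroup.mem_subgroupOf).mpr hmemD, ?_⟩
      rw [map_mul]
      simp only [MulAut.conj_apply, map_mul, map_inv]
      rfl
  have hpermA := hperm X hXK hXc
  have hpermB := hperm Y hYK hYc
  obtain ⟨-, -, hcomm⟩ := finite_pq_commute hp hq hne A B hA hB hcov hpermA hpermB
  have hmemA : π ⟨x, hxK⟩ ∈ A :=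
    Subgroup.mem_map_of_mem _ ((Subgroup.mem_subgroupOf).mpr hxX)
  have hmemB : π ⟨y, hyK⟩ ∈ B :=
    Subgroup.mem_map_of_mem _ ((Subgroup.mem_subgroupOf).mpr hyY)
  have hcxy : Commute (π ⟨x, hxK⟩) (π ⟨y, hyK⟩) := hcomm _ hmemA _ hmemB
  rw [← commutatorElement_eq_one_iff_commute] at hcxy
  have hmemN : (⁅(⟨x, hxK⟩ : K), (⟨y, hyK⟩ : K)⁆ : K) ∈ N := by
    have h2 : π ⁅(⟨x, hxK⟩ : K), (⟨y, hyK⟩ : K)⁆ = 1 := by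
      rw [map_commutatorElement]
      exact hcxy
    exact (QuotientGroup.eq_one_iff _).mp h2
  have hcV : ⁅x, y⁆ ∈ V := by
    apply hNle
    refine ⟨_, hmemN, ?_⟩
    simp [commutatorElement_def]
  exact (hVsub hcV) rfl

end Part2

section Part1

open Pointwise Topology

variable {G : Type*} [Group G] [TopologicalSpace G] [IsTopologicalGroup G]

lemma ambient_comap_open (C V : Subgroup G) (hV : IsOpen (V : Set G)) :
    IsOpen ((V.comap C.subtype : Subgroup C) : Set C) := by
  rw [Subgroup.coe_comap, Subgroup.coe_subtype]
  exact hV.preimage continuous_subtype_val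

/-- Any element of the cyclic closure of a `p`-element is a `p`-element. -/
lemma sigma_of_mem_closure [LocallyCompactSpace G] [T2Space G] [TotallyDisconnectedSpace G]
    {p : ℕ} (hp : p.Prime) {g : G} (hg : IsSigmaElement {p} g) {ξ : G}
    (hξ : ξ ∈ (Subgroup.zpowers g).topologicalClosure)
    (hcpt : IsCompact (closure ((Subgroup.zpowers ξ : Subgroup G) : Set G))) :
    IsSigmaElement {p} ξ :=
  isSigmaElement_of_pow_mem hp ξ hcpt (fun V hV =>
    sigma_pow_mem hp hg hξ V (ambient_comap_open _ V hV))

lemma sigma_one [LocallyCompactSpace G] [T2Space G] [TotallyDisconnectedSpace G]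
    {p : ℕ} (hp : p.Prime)
    (hcpt : IsCompact (closure ((Subgroup.zpowers (1 : G) : Subgroup G) : Set G))) :
    IsSigmaElement {p} (1 : G) :=
  isSigmaElement_of_pow_mem hp 1 hcpt (fun V _ => ⟨0, by simpa using V.one_mem⟩)

lemma sigma_conj [LocallyCompactSpace G] [T2Space G] [TotallyDisconnectedSpace G]
    {p : ℕ} (hp : p.Prime) {g : G} (hg : IsSigmaElement {p} g) (h : G)
    (hcpt : IsCompact (closure ((Subgroup.zpowers (h * g * h⁻¹) : Subgroup G) : Set G))) :
    IsSigmaElement {p} (h * g * h⁻¹) := by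
  apply isSigmaElement_of_pow_mem hp _ hcpt
  intro V hV
  set M : Subgroup G := V.comap (MulAut.conj h).toMonoidHom with hMdef
  have hMopen : IsOpen (M : Set G) := by
    have : (M : Set G) = (fun x => h * x * h⁻¹) ⁻¹' (V : Set G) := by
      rw [hMdef, Subgroup.coe_comap]
      rfl
    rw [this]
    exact hV.preimage ((continuous_const.mul continuous_id).mul continuous_const)
  obtain ⟨t, ht⟩ := sigma_pow_mem hp hg (mem_own_topclosure g) M (ambient_comap_open _ M hMopen)
  refine ⟨t, ?_⟩
  have : (h * g * h⁻¹) ^ p ^ t = h * g ^ p ^ t * h⁻¹ := by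
    rw [conj_pow]
  rw [this]
  exact ht

lemma sigma_mul [LocallyCompactSpace G] [T2Space G] [TotallyDisconnectedSpace G]
    (hqh : TopologicallyQuasihamiltonian G)
    {p : ℕ} (hp : p.Prime) {x y : G}
    (hx : IsSigmaElement {p} x) (hy : IsSigmaElement {p} y)
    (hcpt : IsCompact (closure ((Subgroup.zpowers (x * y) : Subgroup G) : Set G))) :
    IsSigmaElement {p} (x * y) := by
  set X := (Subgroup.zpowers x).topologicalClosure with hXdef
  set Y := (Subgroup.zpowers y).topologicalClosure with hYdef
  have hXc : IsCompact (X : Set G) := coe_topclosure_compact hx.1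
  have hYc : IsCompact (Y : Set G) := coe_topclosure_compact hy.1
  obtain ⟨K, hKset, hKc⟩ := quasih_mul_subgroup hqh X Y hXc hYc
  have hKcl : IsClosed (K : Set G) := hKc.isClosed
  have hXK : X ≤ K := by
    intro a ha
    rw [← SetLike.mem_coe, hKset]
    exact ⟨a, ha, 1, Subgroup.one_mem Y, mul_one a⟩
  have hYK : Y ≤ K := by
    intro a ha
    rw [← SetLike.mem_coe, hKset]
    exact ⟨1, Subgroup.one_mem X, a, ha, one_mul a⟩
  have hxK : x ∈ K := hXK (mem_own_topclosure x)
  have hyK : y ∈ K := hYK (mem_own_topclosure y)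
  apply isSigmaElement_of_pow_mem hp _ hcpt
  intro V hV
  obtain ⟨N, hNnormal, hNopen, hNle, hNindex⟩ := exists_openNormal_in_compact K hKc V hV
  haveI := hNnormal
  haveI : Finite (K ⧸ N) := by
    apply Nat.finite_of_card_ne_zero
    rwa [← Subgroup.index_eq_card]
  set π := QuotientGroup.mk' N with hπdef
  set A := (X.subgroupOf K).map π with hAdef
  set B := (Y.subgroupOf K).map π with hBdef
  have hA : IsPGroup p A := isPGroup_image hp hx hKcl hxK N hNopen
  have hB : IsPGroup p B := isPGroup_image hp hy hKcl hyK N hNopen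
  have hcov : (A : Set (K ⧸ N)) * (B : Set (K ⧸ N)) = Set.univ :=
    image_cover X Y K hKset N
  haveI : Fact p.Prime := ⟨hp⟩
  obtain ⟨α, hα⟩ := IsPGroup.iff_card.mp hA
  obtain ⟨β, hβ⟩ := IsPGroup.iff_card.mp hB
  have hcardF : Nat.card (K ⧸ N) ∣ p ^ (α + β) := by
    have hd := card_mul_set_dvd A B
    rw [hcov, hα, hβ, ← pow_add] at hd
    simpa [Nat.card_univ] using hd
  obtain ⟨γ, _, hγ⟩ := (Nat.dvd_prime_pow hp).mp hcardF
  refine ⟨γ, ?_⟩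
  have hzK : x * y ∈ K := K.mul_mem hxK hyK
  have hpow1 : (π ⟨x * y, hzK⟩) ^ p ^ γ = 1 := by
    rw [← hγ]
    exact pow_card_eq_one'
  have hmemN : (⟨x * y, hzK⟩ : K) ^ p ^ γ ∈ N := by
    rw [← QuotientGroup.eq_one_iff]
    rw [← map_pow] at hpow1
    exact hpow1
  apply hNle
  exact ⟨_, hmemN, by simp⟩

lemma sigma_closed [LocallyCompactSpace G] [T2Space G] [TotallyDisconnectedSpace G]
    (hqh : TopologicallyQuasihamiltonian G)
    (hper : ∀ g : G, IsCompact (closure ((Subgroup.zpowers g : Subgroup G) : Set G)))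
    {p : ℕ} (hp : p.Prime) {x : G}
    (hx : x ∈ closure {g : G | IsSigmaElement {p} g}) :
    IsSigmaElement {p} x := by
  apply isSigmaElement_of_pow_mem hp x (hper x)
  intro V hV
  obtain ⟨U, hUopen, hUc, -⟩ :=
    exists_compact_openSubgroup_subset (Filter.univ_mem (f := 𝓝 (1 : G)))
  set X := (Subgroup.zpowers x).topologicalClosure with hXdef
  have hXc : IsCompact (X : Set G) := coe_topclosure_compact (hper x)
  obtain ⟨K, hKset, hKc⟩ := quasih_mul_subgroup hqh X U hXc hUc
  have hKcl : IsClosed (K : Set G) := hKc.isClosed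
  haveI : CompactSpace K := isCompact_iff_compactSpace.mp hKc
  have hXK : X ≤ K := by
    intro a ha
    rw [← SetLike.mem_coe, hKset]
    exact ⟨a, ha, 1, Subgroup.one_mem U, mul_one a⟩
  have hUK : U ≤ K := by
    intro a ha
    rw [← SetLike.mem_coe, hKset]
    exact ⟨1, Subgroup.one_mem X, a, ha, one_mul a⟩
  have hxK : x ∈ K := hXK (mem_own_topclosure x)
  obtain ⟨N, hNnormal, hNopen, hNle, hNindex⟩ := exists_openNormal_in_compact K hKc V hV
  haveI := hNnormal
  haveI : Finite (K ⧸ N) := by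
    apply Nat.finite_of_card_ne_zero
    rwa [← Subgroup.index_eq_card]
  set n := Nat.card (K ⧸ N) with hndef
  set S : Set G := (K : Set G) ∩ ((fun h => h ^ p ^ n) ⁻¹' ((N.map K.subtype : Subgroup G) : Set G))
    with hSdef
  have hNmapclosed : IsClosed ((N.map K.subtype : Subgroup G) : Set G) := by
    have h1 : IsClosed (N : Set K) := Subgroup.isClosed_of_isOpen _ hNopen
    have h2 : IsCompact (N : Set K) := h1.isCompact
    have h3 : ((N.map K.subtype : Subgroup G) : Set G) = Subtype.val '' (N : Set K) := by
      ext a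
      simp [Subgroup.mem_map, Set.mem_image, Subgroup.coe_subtype]
    rw [h3]
    exact (h2.image continuous_subtype_val).isClosed
  have hSclosed : IsClosed S := by
    apply IsClosed.inter hKcl
    exact hNmapclosed.preimage (continuous_pow (p ^ n))
  -- the coset x * U
  set cos : Set G := (fun u => x * u) '' (U : Set G) with hcosdef
  have hcosopen : IsOpen cos := (Homeomorph.mulLeft x).isOpenMap _ hUopen
  have hxcos : x ∈ cos := ⟨1, U.one_mem, mul_one x⟩
  have hsub : {g : G | IsSigmaElement {p} g} ∩ cos ⊆ S := by
    rintro g ⟨hgsigma, hgcos⟩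
    obtain ⟨u, hu, rfl⟩ := hgcos
    have hgK : x * u ∈ K := K.mul_mem hxK (hUK hu)
    refine ⟨hgK, ?_⟩
    obtain ⟨t, ht⟩ := sigma_pow_mem_of_le hp hgsigma hKcl hgK
      (mem_own_topclosure (x * u)) hNopen
    have hord : orderOf ((QuotientGroup.mk' N) ⟨x * u, hgK⟩) ∣ p ^ t :=
      orderOf_mk_dvd_pow hgK ht
    have hpow1 : ((QuotientGroup.mk' N) ⟨x * u, hgK⟩) ^ p ^ n = 1 :=
      pow_card_eq_one_of_orderOf_dvd_pow hp hord
    have hmemN : (⟨x * u, hgK⟩ : K) ^ p ^ n ∈ N := by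
      rw [← QuotientGroup.eq_one_iff]
      rw [← map_pow] at hpow1
      exact hpow1
    show (x * u) ^ p ^ n ∈ ((N.map K.subtype : Subgroup G) : Set G)
    exact ⟨_, hmemN, by simp⟩
  have hxS : x ∈ S := by
    have hxcl : x ∈ closure ({g : G | IsSigmaElement {p} g} ∩ cos) := by
      rw [mem_closure_iff_nhds] at hx ⊢
      intro t ht
      obtain ⟨a, ha1, ha2⟩ := hx (t ∩ cos) (Filter.inter_mem ht (hcosopen.mem_nhds hxcos))
      exact ⟨a, ha1.1, ha2, ha1.2⟩
    have := closure_mono hsub hxcl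
    rwa [hSclosed.closure_eq] at this
  refine ⟨n, ?_⟩
  exact hNle hxS.2

end Part1

/-- Let `G` be a periodic topologically quasihamiltonian group. Then for every prime `p`
the set `G_p` of `p`-elements is a closed normal subgroup, and for distinct primes `p ≠ q`
every `p`-element commutes with every `q`-element. -/
theorem stmt16 {G : Type*} [Group G] [TopologicalSpace G] [IsTopologicalGroup G]
    (hG : IsPeriodicGroup G) (hqh : TopologicallyQuasihamiltonian G) :
    (∀ p : ℕ, p.Prime → ∃ P : Subgroup G,
        (P : Set G) = {g : G | IsSigmaElement {p} g} ∧
        IsClosed (P : Set G) ∧ P.Normal) ∧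
    (∀ p q : ℕ, p.Prime → q.Prime → p ≠ q →
        ∀ x y : G, IsSigmaElement {p} x → IsSigmaElement {q} y → Commute x y) := by
  obtain ⟨hlc, ht2, htd, hper⟩ := hG
  haveI := hlc
  haveI := ht2
  haveI := htd
  constructor
  · intro p hp
    refine ⟨{
      carrier := {g : G | IsSigmaElement {p} g}
      one_mem' := sigma_one hp (hper 1)
      mul_mem' := fun hx hy => sigma_mul hqh hp hx hy (hper _)
      inv_mem' := fun {g} hg =>
        sigma_of_mem_closure hp hg ((Subgroup.zpowers g).topologicalClosure.inv_mem
          (mem_own_topclosure g)) (hper g⁻¹) }, rfl, ?_, ?_⟩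
    · apply isClosed_of_closure_subset
      intro x hx
      exact sigma_closed hqh hper hp hx
    · constructor
      intro n hn g
      exact sigma_conj hp hn g (hper _)
  · intro p q hp hq hne x y hx hy
    exact commute_of_sigma hqh hp hq hne hx hy
end

section
/- Let p and q be primes with p dividing q − 1, let ζ be an element of order p in the multiplicative group (ℤ/qℤ)ˣ, let V be a nontrivial vector space over the field ℤ/qℤ (equivalently, a nontrivial abelian group in which every element x satisfies q·x = 0), and let G = V ⋊ ℤ/pℤ be the semidirect product in which the generator of ℤ/pℤ acts on V by scalar multiplication by ζ. Then: (i) the lattice of subgroups of G is modular; (ii) G is not quasihamiltonian: there exist subgroups X and Y of G with X·Y ≠ Y·X as subsets of G. -/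
open Pointwise

namespace Stmt18Aux

variable {p q : ℕ} {V : Type*} [AddCommGroup V] [Module (ZMod q) V]
  {ζ : (ZMod q)ˣ} {φ : Multiplicative (ZMod p) →* MulAut (Multiplicative V)}

/-- scalar by which `k : ZMod p` acts -/
def cc (ζ : (ZMod q)ˣ) (m : ZMod p) : ZMod q := (ζ : ZMod q) ^ m.val

def ee (φ : Multiplicative (ZMod p) →* MulAut (Multiplicative V)) (v : V) (k : ZMod p) :
    Multiplicative V ⋊[φ] Multiplicative (ZMod p) :=
  ⟨Multiplicative.ofAdd v, Multiplicative.ofAdd k⟩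

lemma ee_cases (g : Multiplicative V ⋊[φ] Multiplicative (ZMod p)) :
    ∃ v k, g = ee φ v k :=
  ⟨Multiplicative.toAdd g.left, Multiplicative.toAdd g.right, rfl⟩

lemma ee_one : ee φ (0 : V) (0 : ZMod p) = 1 := rfl

lemma ee_inj {v w : V} {k l : ZMod p} : ee φ v k = ee φ w l ↔ v = w ∧ k = l := by
  unfold ee
  rw [SemidirectProduct.ext_iff]
  simp

lemma cc_zero : cc ζ (0 : ZMod p) = 1 := by simp [cc]

lemma cc_natCast (hζ : orderOf ζ = p) (n : ℕ) : cc ζ ((n : ZMod p)) = (ζ : ZMod q) ^ n := by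
  have h : orderOf (ζ : ZMod q) = p := orderOf_units.trans hζ
  rw [cc, ZMod.val_natCast, ← pow_mod_orderOf (ζ : ZMod q) n, h]

lemma cc_add [NeZero p] (hζ : orderOf ζ = p) (k l : ZMod p) :
    cc ζ (k + l) = cc ζ k * cc ζ l := by
  have h : orderOf (ζ : ZMod q) = p := orderOf_units.trans hζ
  rw [cc, cc, cc, ZMod.val_add, ← pow_add, ← pow_mod_orderOf (ζ : ZMod q) (k.val + l.val), h]

lemma cc_mul_cc_neg [NeZero p] (hζ : orderOf ζ = p) (k : ZMod p) :
    cc ζ k * cc ζ (-k) = 1 := by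
  rw [← cc_add hζ, add_neg_cancel, cc_zero]


lemma cc_one (hp1 : p ≠ 1) : cc ζ (1 : ZMod p) = (ζ : ZMod q) := by
  rw [cc, ZMod.val_one'' hp1, pow_one]

lemma zeta_ne_one (hp1 : p ≠ 1) (hζ : orderOf ζ = p) : (ζ : ZMod q) ≠ 1 := by
  intro h
  have : orderOf (ζ : ZMod q) = p := orderOf_units.trans hζ
  rw [h, orderOf_one] at this
  exact hp1 this.symm

lemma one_sub_zeta_ne_zero (hp1 : p ≠ 1) (hζ : orderOf ζ = p) : 1 - (ζ : ZMod q) ≠ 0 :=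
  sub_ne_zero_of_ne (Ne.symm (zeta_ne_one hp1 hζ))

lemma one_sub_cc_ne_zero [NeZero p] (hζ : orderOf ζ = p) {k : ZMod p} (hk : k ≠ 0) :
    1 - cc ζ k ≠ 0 := by
  have h : orderOf (ζ : ZMod q) = p := orderOf_units.trans hζ
  refine sub_ne_zero_of_ne (Ne.symm ?_)
  intro hcc
  rw [cc] at hcc
  have hdvd := orderOf_dvd_of_pow_eq_one hcc
  rw [h] at hdvd
  have h1 : k.val ≠ 0 := fun h0 => hk ((ZMod.val_eq_zero k).mp h0)
  have := Nat.le_of_dvd (Nat.pos_of_ne_zero h1) hdvd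
  exact absurd (ZMod.val_lt k) (not_lt.mpr this)

section withphi

variable (hζ : orderOf ζ = p)
  (hφ : ∀ v : V, φ (Multiplicative.ofAdd (1 : ZMod p)) (Multiplicative.ofAdd v) =
      Multiplicative.ofAdd ((ζ : ZMod q) • v))

include hζ hφ in
lemma phi_apply [NeZero p] (k : ZMod p) (v : V) :
    φ (Multiplicative.ofAdd k) (Multiplicative.ofAdd v) =
      Multiplicative.ofAdd (cc ζ k • v) := by
  have key : ∀ (n : ℕ) (w : V), φ (Multiplicative.ofAdd ((n : ZMod p)))
      (Multiplicative.ofAdd w) = Multiplicative.ofAdd (((ζ : ZMod q) ^ n) • w) := by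
    intro n
    induction n with
    | zero => intro w; simp
    | succ n ih =>
      intro w
      have hcast : ((n + 1 : ℕ) : ZMod p) = (n : ZMod p) + 1 := by push_cast; ring
      rw [hcast, ofAdd_add, map_mul, MulAut.mul_apply, hφ w, ih, pow_succ, mul_smul]
  conv_lhs => rw [← ZMod.natCast_zmod_val k]
  rw [key, cc]

include hζ hφ in
lemma ee_mul [NeZero p] (v w : V) (k l : ZMod p) :
    ee φ v k * ee φ w l = ee φ (v + cc ζ k • w) (k + l) := by
  unfold ee
  rw [SemidirectProduct.mul_def]
  rw [phi_apply hζ hφ, ← ofAdd_add, ← ofAdd_add]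

end withphi

lemma ee_mul_zero (v w : V) (l : ZMod p) :
    ee φ v 0 * ee φ w l = ee φ (v + w) l := by
  unfold ee
  rw [SemidirectProduct.mul_def]
  simp [← ofAdd_add]

lemma ee_pow_zero (v : V) (n : ℕ) : ee φ v 0 ^ n = ee φ (n • v) 0 := by
  induction n with
  | zero => rw [pow_zero, zero_smul, ee_one]
  | succ n ih => rw [pow_succ, ih, ee_mul_zero, succ_nsmul]

section withphi2
variable (hζ : orderOf ζ = p)
  (hφ : ∀ v : V, φ (Multiplicative.ofAdd (1 : ZMod p)) (Multiplicative.ofAdd v) =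
      Multiplicative.ofAdd ((ζ : ZMod q) • v))

include hζ hφ in
lemma ee_inv [NeZero p] (v : V) (k : ZMod p) :
    (ee φ v k)⁻¹ = ee φ (-(cc ζ (-k) • v)) (-k) := by
  apply inv_eq_of_mul_eq_one_left
  rw [ee_mul hζ hφ, neg_add_cancel, neg_add_cancel, ee_one]

include hζ hφ in
lemma gen_pow [NeZero p] (w : V) (n : ℕ) :
    (ee φ ((1 - (ζ : ZMod q)) • w) 1) ^ n
      = ee φ ((1 - (ζ : ZMod q) ^ n) • w) ((n : ZMod p)) := by
  induction n with
  | zero => rw [pow_zero, pow_zero, sub_self, zero_smul, Nat.cast_zero, ee_one]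
  | succ n ih =>
    rw [pow_succ, ih, ee_mul hζ hφ, cc_natCast hζ]
    rw [ee_inj]
    constructor
    · rw [smul_smul, ← add_smul]
      congr 1
      ring
    · push_cast; ring

end withphi2


section subgroups

variable (hζ : orderOf ζ = p)
  (hφ : ∀ v : V, φ (Multiplicative.ofAdd (1 : ZMod p)) (Multiplicative.ofAdd v) =
      Multiplicative.ofAdd ((ζ : ZMod q) • v))

/-- The subgroup `u ⋅ (W ⋊ C) ⋅ u⁻¹`. -/
def KK [NeZero p] (W : Submodule (ZMod q) V) (u : V) :
    Subgroup (Multiplicative V ⋊[φ] Multiplicative (ZMod p)) where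
  carrier := {g | Multiplicative.toAdd g.left
      - (1 - cc ζ (Multiplicative.toAdd g.right)) • u ∈ W}
  one_mem' := by
    simp only [Set.mem_setOf_eq, SemidirectProduct.one_left, SemidirectProduct.one_right,
      toAdd_one, cc_zero, sub_self, zero_smul, sub_zero]
    exact W.zero_mem
  mul_mem' := by
    intro a b ha hb
    simp only [Set.mem_setOf_eq] at ha hb ⊢
    obtain ⟨va, ka, rfl⟩ := ee_cases a
    obtain ⟨vb, kb, rfl⟩ := ee_cases b
    rw [ee_mul hζ hφ]
    have ha' : va - (1 - cc ζ ka) • u ∈ W := ha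
    have hb' : vb - (1 - cc ζ kb) • u ∈ W := hb
    show va + cc ζ ka • vb - (1 - cc ζ (ka + kb)) • u ∈ W
    have hkey : va + cc ζ ka • vb - (1 - cc ζ (ka + kb)) • u
        = (va - (1 - cc ζ ka) • u) + cc ζ ka • (vb - (1 - cc ζ kb) • u) := by
      rw [cc_add hζ]
      module
    rw [hkey]
    exact W.add_mem ha' (W.smul_mem _ hb')
  inv_mem' := by
    intro a ha
    simp only [Set.mem_setOf_eq] at ha ⊢
    obtain ⟨va, ka, rfl⟩ := ee_cases a
    rw [ee_inv hζ hφ]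
    have ha' : va - (1 - cc ζ ka) • u ∈ W := ha
    show -(cc ζ (-ka) • va) - (1 - cc ζ (-ka)) • u ∈ W
    have h1 : cc ζ (-ka) * cc ζ ka = 1 := by
      rw [mul_comm]; exact cc_mul_cc_neg hζ ka
    have hkey : -(cc ζ (-ka) • va) - (1 - cc ζ (-ka)) • u
        = (-(cc ζ (-ka))) • (va - (1 - cc ζ ka) • u) + (cc ζ (-ka) * cc ζ ka - 1) • u := by
      module
    rw [hkey, h1]
    simp only [sub_self, zero_smul, add_zero]
    exact W.smul_mem _ ha'

lemma mem_KK [NeZero p] {W : Submodule (ZMod q) V} {u : V} {v : V} {k : ZMod p} :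
    ee φ v k ∈ KK hζ hφ W u ↔ v - (1 - cc ζ k) • u ∈ W := Iff.rfl

end subgroups

/-- The subgroup of `G` corresponding to a submodule of `V`. -/
def VS (φ : Multiplicative (ZMod p) →* MulAut (Multiplicative V))
    (W : Submodule (ZMod q) V) :
    Subgroup (Multiplicative V ⋊[φ] Multiplicative (ZMod p)) where
  carrier := {g | g.right = 1 ∧ Multiplicative.toAdd g.left ∈ W}
  one_mem' := ⟨rfl, by simp only [SemidirectProduct.one_left, toAdd_one]; exact W.zero_mem⟩
  mul_mem' := by
    rintro a b ⟨ha1, ha2⟩ ⟨hb1, hb2⟩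
    refine ⟨by rw [SemidirectProduct.mul_right, ha1, hb1, mul_one], ?_⟩
    rw [SemidirectProduct.mul_left, ha1, map_one, MulAut.one_apply, toAdd_mul]
    exact W.add_mem ha2 hb2
  inv_mem' := by
    rintro a ⟨ha1, ha2⟩
    refine ⟨by rw [SemidirectProduct.inv_right, ha1, inv_one], ?_⟩
    rw [SemidirectProduct.inv_left, ha1, inv_one, map_one, MulAut.one_apply, toAdd_inv]
    exact W.neg_mem ha2

lemma mem_VS {W : Submodule (ZMod q) V} {v : V} {k : ZMod p} :
    ee φ v k ∈ VS φ W ↔ k = 0 ∧ v ∈ W := by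
  show Multiplicative.ofAdd k = 1 ∧ v ∈ W ↔ _
  rw [show (1 : Multiplicative (ZMod p)) = Multiplicative.ofAdd 0 from rfl]
  simp

/-- The submodule of `V` extracted from a subgroup. -/
def Sv [NeZero q] (φ : Multiplicative (ZMod p) →* MulAut (Multiplicative V))
    (S : Subgroup (Multiplicative V ⋊[φ] Multiplicative (ZMod p))) :
    Submodule (ZMod q) V where
  carrier := {x | ee φ x 0 ∈ S}
  zero_mem' := by show ee φ 0 0 ∈ S; rw [ee_one]; exact S.one_mem
  add_mem' := by
    intro a b ha hb
    have := S.mul_mem ha hb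
    rwa [ee_mul_zero] at this
  smul_mem' := by
    intro c x hx
    show ee φ (c • x) 0 ∈ S
    have h1 : c • x = ((c.val : ZMod q)) • x := by rw [ZMod.natCast_zmod_val]
    rw [h1, Nat.cast_smul_eq_nsmul, ← ee_pow_zero]
    exact S.pow_mem hx _

lemma mem_Sv [NeZero q] {S : Subgroup (Multiplicative V ⋊[φ] Multiplicative (ZMod p))} {x : V} :
    x ∈ (Sv φ S : Submodule (ZMod q) V) ↔ ee φ x 0 ∈ S := Iff.rfl

lemma Sv_inf [NeZero q] (S T : Subgroup (Multiplicative V ⋊[φ] Multiplicative (ZMod p))) :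
    (Sv φ (S ⊓ T) : Submodule (ZMod q) V) = Sv φ S ⊓ Sv φ T := by
  ext x
  simp [mem_Sv, Subgroup.mem_inf, Submodule.mem_inf]


section main

variable (hζ : orderOf ζ = p)
  (hφ : ∀ v : V, φ (Multiplicative.ofAdd (1 : ZMod p)) (Multiplicative.ofAdd v) =
      Multiplicative.ofAdd ((ζ : ZMod q) • v))

include hζ hφ

lemma classify [NeZero p] [NeZero q]
    (S : Subgroup (Multiplicative V ⋊[φ] Multiplicative (ZMod p))) (w : V)
    (hw : ee φ ((1 - (ζ : ZMod q)) • w) 1 ∈ S) :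
    S = KK hζ hφ (Sv φ S) w := by
  ext g
  obtain ⟨v, m, rfl⟩ := ee_cases g
  have hpow : (ee φ ((1 - (ζ : ZMod q)) • w) 1) ^ m.val = ee φ ((1 - cc ζ m) • w) m := by
    rw [gen_pow hζ hφ, ZMod.natCast_zmod_val]
    rfl
  have hg1 : ee φ ((1 - cc ζ m) • w) m ∈ S := hpow ▸ S.pow_mem hw m.val
  have hsplit : ee φ v m * (ee φ ((1 - cc ζ m) • w) m)⁻¹
      = ee φ (v - (1 - cc ζ m) • w) 0 := by
    rw [ee_inv hζ hφ, ee_mul hζ hφ, ee_inj]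
    constructor
    · rw [smul_neg, smul_smul, cc_mul_cc_neg hζ, one_smul]; abel
    · exact add_neg_cancel m
  have hkey : ee φ v m = ee φ (v - (1 - cc ζ m) • w) 0 * ee φ ((1 - cc ζ m) • w) m := by
    rw [ee_mul_zero, sub_add_cancel]
  constructor
  · intro hS
    rw [mem_KK, mem_Sv, ← hsplit]
    exact S.mul_mem hS (S.inv_mem hg1)
  · intro hK
    rw [mem_KK, mem_Sv] at hK
    rw [hkey]
    exact S.mul_mem hK hg1

lemma Sv_KK [NeZero p] [NeZero q] (W : Submodule (ZMod q) V) (u : V) :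
    (Sv φ (KK hζ hφ W u) : Submodule (ZMod q) V) = W := by
  ext x
  rw [mem_Sv, mem_KK, cc_zero, sub_self, zero_smul, sub_zero]

lemma kk_inf [NeZero p] (W E : Submodule (ZMod q) V) (u : V) :
    KK hζ hφ W u ⊓ KK hζ hφ E u = KK hζ hφ (W ⊓ E) u := by
  ext g
  obtain ⟨v, m, rfl⟩ := ee_cases g
  rw [Subgroup.mem_inf, mem_KK, mem_KK, mem_KK, Submodule.mem_inf]

lemma exists_gen [NeZero p] [NeZero q] [Fact p.Prime] [Fact q.Prime]
    (S : Subgroup (Multiplicative V ⋊[φ] Multiplicative (ZMod p)))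
    (g : Multiplicative V ⋊[φ] Multiplicative (ZMod p)) (hg : g ∈ S)
    (hg' : Multiplicative.toAdd g.right ≠ 0) :
    ∃ w, ee φ ((1 - (ζ : ZMod q)) • w) 1 ∈ S := by
  obtain ⟨v, k, rfl⟩ := ee_cases g
  have hk : k ≠ 0 := hg'
  have hp1 : p ≠ 1 := (Fact.out : p.Prime).ne_one
  -- take the power with exponent (k⁻¹).val
  have hmem := S.pow_mem hg ((k⁻¹ : ZMod p).val)
  obtain ⟨v', k', hvk⟩ := ee_cases ((ee φ v k) ^ (k⁻¹ : ZMod p).val)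
  have hk' : k' = 1 := by
    have h1 : ((ee φ v k) ^ (k⁻¹ : ZMod p).val).right
        = (Multiplicative.ofAdd k) ^ (k⁻¹ : ZMod p).val := by
      rw [← SemidirectProduct.rightHom_eq_right, map_pow]
      rfl
    have h2 : (ee φ v' k').right = Multiplicative.ofAdd k' := rfl
    rw [hvk] at h1
    rw [h2] at h1
    have : Multiplicative.ofAdd k' = Multiplicative.ofAdd (((k⁻¹ : ZMod p).val : ZMod p) * k) := by
      rw [h1]
      rw [show ((Multiplicative.ofAdd k) ^ (k⁻¹ : ZMod p).val : Multiplicative (ZMod p))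
        = Multiplicative.ofAdd ((k⁻¹ : ZMod p).val • k) from rfl]
      rw [nsmul_eq_mul]
    have h3 : k' = ((k⁻¹ : ZMod p).val : ZMod p) * k := by
      exact Multiplicative.ofAdd.injective this
    rw [h3, ZMod.natCast_zmod_val, inv_mul_cancel₀ hk]
  rw [hvk, hk'] at hmem
  refine ⟨(1 - (ζ : ZMod q))⁻¹ • v', ?_⟩
  rwa [smul_inv_smul₀ (one_sub_zeta_ne_zero hp1 hζ)]

lemma normal_of_right_trivial [NeZero p] [NeZero q]
    (S : Subgroup (Multiplicative V ⋊[φ] Multiplicative (ZMod p)))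
    (hS : ∀ g ∈ S, Multiplicative.toAdd g.right = 0) : S.Normal := by
  constructor
  intro n hn g
  obtain ⟨vn, kn, rfl⟩ := ee_cases n
  have hk : kn = 0 := hS _ hn
  subst hk
  obtain ⟨vg, kg, rfl⟩ := ee_cases g
  have hconj : ee φ vg kg * ee φ vn 0 * (ee φ vg kg)⁻¹ = ee φ (cc ζ kg • vn) 0 := by
    rw [ee_inv hζ hφ, ee_mul hζ hφ, ee_mul hζ hφ, ee_inj]
    constructor
    · have h1 : cc ζ (kg + 0) = cc ζ kg := by rw [add_zero]
      rw [h1, smul_neg, smul_smul, cc_mul_cc_neg hζ, one_smul]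
      abel
    · rw [add_zero, add_neg_cancel]
  rw [hconj]
  have hsc : ee φ (cc ζ kg • vn) 0 = (ee φ vn 0) ^ ((cc ζ kg).val) := by
    rw [ee_pow_zero, ← Nat.cast_smul_eq_nsmul (ZMod q), ZMod.natCast_zmod_val]
  rw [hsc]
  exact S.pow_mem hn _

end main


section main2

variable (hζ : orderOf ζ = p)
  (hφ : ∀ v : V, φ (Multiplicative.ofAdd (1 : ZMod p)) (Multiplicative.ofAdd v) =
      Multiplicative.ofAdd ((ζ : ZMod q) • v))

include hζ hφ

lemma kk_sup [NeZero p] [NeZero q] [Fact p.Prime] [Fact q.Prime]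
    (A B : Submodule (ZMod q) V) (u v : V) :
    KK hζ hφ A u ⊔ KK hζ hφ B v
      = KK hζ hφ (A ⊔ B ⊔ Submodule.span (ZMod q) {u - v}) u := by
  have hp1 : p ≠ 1 := (Fact.out : p.Prime).ne_one
  apply le_antisymm
  · apply sup_le
    · intro g hg
      obtain ⟨x, m, rfl⟩ := ee_cases g
      rw [mem_KK] at hg ⊢
      exact Submodule.mem_sup_left (Submodule.mem_sup_left hg)
    · intro g hg
      obtain ⟨x, m, rfl⟩ := ee_cases g
      rw [mem_KK] at hg ⊢
      have hx : x - (1 - cc ζ m) • u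
          = (x - (1 - cc ζ m) • v) + (-(1 - cc ζ m)) • (u - v) := by module
      rw [hx]
      exact Submodule.add_mem _ (Submodule.mem_sup_left (Submodule.mem_sup_right hg))
        (Submodule.mem_sup_right (Submodule.smul_mem _ _
          (Submodule.mem_span_singleton_self _)))
  · intro g hg
    obtain ⟨x, m, rfl⟩ := ee_cases g
    rw [mem_KK] at hg
    obtain ⟨y, hy, z, hz, hsum⟩ := Submodule.mem_sup.mp hg
    obtain ⟨a, ha, b, hb, rfl⟩ := Submodule.mem_sup.mp hy
    obtain ⟨t, rfl⟩ := Submodule.mem_span_singleton.mp hz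
    have hxeq : x = a + (b + (t • (u - v) + (1 - cc ζ m) • u)) := by
      have h2 : x = a + b + t • (u - v) + (1 - cc ζ m) • u :=
        (eq_sub_iff_add_eq.mp hsum).symm
      rw [h2]; abel
    have hfac : ee φ x m = ee φ a 0 * (ee φ b 0 *
        (ee φ (t • (u - v)) 0 * ee φ ((1 - cc ζ m) • u) m)) := by
      rw [ee_mul_zero, ee_mul_zero, ee_mul_zero, ee_inj]
      exact ⟨hxeq, rfl⟩
    rw [hfac]
    have hmA : ee φ a 0 ∈ KK hζ hφ A u := by
      rw [mem_KK, cc_zero, sub_self, zero_smul, sub_zero]; exact ha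
    have hmB : ee φ b 0 ∈ KK hζ hφ B v := by
      rw [mem_KK, cc_zero, sub_self, zero_smul, sub_zero]; exact hb
    have hmU : ee φ ((1 - cc ζ m) • u) m ∈ KK hζ hφ A u := by
      rw [mem_KK, sub_self]; exact A.zero_mem
    have hgen : ee φ ((1 - (ζ : ZMod q)) • (u - v)) 0 ∈ KK hζ hφ A u ⊔ KK hζ hφ B v := by
      have h1 : ee φ ((1 - (ζ : ZMod q)) • u) 1 ∈ KK hζ hφ A u := by
        rw [mem_KK, cc_one hp1, sub_self]; exact A.zero_mem
      have h2 : ee φ ((1 - (ζ : ZMod q)) • v) 1 ∈ KK hζ hφ B v := by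
        rw [mem_KK, cc_one hp1, sub_self]; exact B.zero_mem
      have hfac2 : ee φ ((1 - (ζ : ZMod q)) • (u - v)) 0
          = ee φ ((1 - (ζ : ZMod q)) • u) 1 * (ee φ ((1 - (ζ : ZMod q)) • v) 1)⁻¹ := by
        rw [ee_inv hζ hφ, ee_mul hζ hφ, ee_inj]
        constructor
        · rw [smul_neg, smul_smul, cc_mul_cc_neg hζ, one_smul, smul_sub]
          abel
        · rw [add_neg_cancel]
      rw [hfac2]
      exact mul_mem (Subgroup.mem_sup_left h1) (inv_mem (Subgroup.mem_sup_right h2))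
    have hmT : ee φ (t • (u - v)) 0 ∈ KK hζ hφ A u ⊔ KK hζ hφ B v := by
      have hne : (1 - (ζ : ZMod q)) ≠ 0 := one_sub_zeta_ne_zero hp1 hζ
      have heq2 : ee φ (t • (u - v)) 0
          = (ee φ ((1 - (ζ : ZMod q)) • (u - v)) 0) ^ ((t * (1 - (ζ : ZMod q))⁻¹).val) := by
        rw [ee_pow_zero, ← Nat.cast_smul_eq_nsmul (ZMod q), ZMod.natCast_zmod_val, smul_smul,
          mul_assoc, inv_mul_cancel₀ hne, mul_one]
      rw [heq2]
      exact pow_mem hgen _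
    exact mul_mem (Subgroup.mem_sup_left hmA) (mul_mem (Subgroup.mem_sup_right hmB) (mul_mem hmT (Subgroup.mem_sup_left hmU)))

lemma kk_sup_vs [NeZero p] [NeZero q] (A W : Submodule (ZMod q) V) (u : V) :
    KK hζ hφ A u ⊔ VS φ W = KK hζ hφ (A ⊔ W) u := by
  apply le_antisymm
  · apply sup_le
    · intro g hg
      obtain ⟨x, m, rfl⟩ := ee_cases g
      rw [mem_KK] at hg ⊢
      exact Submodule.mem_sup_left hg
    · intro g hg
      obtain ⟨x, m, rfl⟩ := ee_cases g
      rw [mem_VS] at hg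
      obtain ⟨rfl, hx⟩ := hg
      rw [mem_KK, cc_zero, sub_self, zero_smul, sub_zero]
      exact Submodule.mem_sup_right hx
  · intro g hg
    obtain ⟨x, m, rfl⟩ := ee_cases g
    rw [mem_KK] at hg
    obtain ⟨a, ha, w, hw, hsum⟩ := Submodule.mem_sup.mp hg
    have hfac : ee φ x m = ee φ w 0 * ee φ (a + (1 - cc ζ m) • u) m := by
      rw [ee_mul_zero, ee_inj]
      refine ⟨?_, rfl⟩
      have : x = a + w + (1 - cc ζ m) • u := (eq_sub_iff_add_eq.mp hsum).symm
      rw [this]; abel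
    rw [hfac]
    have h1 : ee φ w 0 ∈ VS φ W := by rw [mem_VS]; exact ⟨rfl, hw⟩
    have h2 : ee φ (a + (1 - cc ζ m) • u) m ∈ KK hζ hφ A u := by
      rw [mem_KK, add_sub_cancel_right]; exact ha
    exact mul_mem (Subgroup.mem_sup_right h1) (Subgroup.mem_sup_left h2)

lemma inf_vs [NeZero p] [NeZero q] [Fact q.Prime]
    (B E : Submodule (ZMod q) V) (v u : V) (h : u - v ∉ B ⊔ E) :
    KK hζ hφ B v ⊓ KK hζ hφ E u = VS φ (B ⊓ E) := by
  ext g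
  obtain ⟨x, m, rfl⟩ := ee_cases g
  rw [Subgroup.mem_inf, mem_KK, mem_KK, mem_VS, Submodule.mem_inf]
  constructor
  · rintro ⟨hB, hE⟩
    rcases eq_or_ne m 0 with rfl | hm
    · simp only [cc_zero, sub_self, zero_smul, sub_zero] at hB hE
      exact ⟨rfl, hB, hE⟩
    · exfalso
      apply h
      have hvec : (1 - cc ζ m) • (u - v)
          = (x - (1 - cc ζ m) • v) - (x - (1 - cc ζ m) • u) := by module
      have hmem : (1 - cc ζ m) • (u - v) ∈ B ⊔ E :=
        hvec ▸ sub_mem (Submodule.mem_sup_left hB) (Submodule.mem_sup_right hE)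
      have hne : (1 - cc ζ m) ≠ 0 := one_sub_cc_ne_zero hζ hm
      have := Submodule.smul_mem _ (1 - cc ζ m)⁻¹ hmem
      rwa [inv_smul_smul₀ hne] at this
  · rintro ⟨rfl, hB, hE⟩
    simp only [cc_zero, sub_self, zero_smul, sub_zero]
    exact ⟨hB, hE⟩

end main2

-- pure submodule identities
section submod

variable {A B E : Submodule (ZMod q) V}

lemma subid_a [Fact q.Prime] (hAE : A ≤ E) {b e : V} (hb : b ∈ B) (he : e ∈ E) :
    A ⊔ (B ⊓ E) ⊔ Submodule.span (ZMod q) {e}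
      = (A ⊔ B ⊔ Submodule.span (ZMod q) {b + e}) ⊓ E := by
  apply le_antisymm
  · refine le_inf ?_ ?_
    · refine sup_le (sup_le ?_ ?_) ?_
      · exact le_sup_left.trans le_sup_left
      · exact inf_le_left.trans (le_sup_right.trans le_sup_left)
      · rw [Submodule.span_le, Set.singleton_subset_iff]
        have h := sub_mem
          (Submodule.mem_sup_right (Submodule.mem_span_singleton_self (b + e))
            : b + e ∈ A ⊔ B ⊔ Submodule.span (ZMod q) {b + e})
          (Submodule.mem_sup_left (Submodule.mem_sup_right hb))
        rwa [add_sub_cancel_left] at h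
    · refine sup_le (sup_le hAE inf_le_right) ?_
      rw [Submodule.span_le, Set.singleton_subset_iff]
      exact he
  · rintro x hx
    rw [Submodule.mem_inf] at hx
    obtain ⟨hx1, hxE⟩ := hx
    obtain ⟨y, hy, z, hz, hsum⟩ := Submodule.mem_sup.mp hx1
    obtain ⟨a, ha, b', hb', rfl⟩ := Submodule.mem_sup.mp hy
    obtain ⟨t, rfl⟩ := Submodule.mem_span_singleton.mp hz
    have hBE : b' + t • b ∈ B ⊓ E := by
      rw [Submodule.mem_inf]
      constructor
      · exact B.add_mem hb' (B.smul_mem _ hb)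
      · have : b' + t • b = x - a - t • e := by
          rw [← hsum]; rw [smul_add]; abel
        rw [this]
        exact sub_mem (sub_mem hxE (hAE ha)) (E.smul_mem _ he)
    have hdecomp : x = a + (b' + t • b) + t • e := by
      rw [← hsum, smul_add]; abel
    rw [hdecomp]
    exact add_mem (add_mem (Submodule.mem_sup_left (Submodule.mem_sup_left ha))
        (Submodule.mem_sup_left (Submodule.mem_sup_right hBE)))
      (Submodule.mem_sup_right (Submodule.smul_mem _ _ (Submodule.mem_span_singleton_self _)))

lemma subid_b [Fact q.Prime] (hAE : A ≤ E) {d : V}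
    (hd : d ∉ B ⊔ E) :
    A ⊔ (B ⊓ E) = (A ⊔ B ⊔ Submodule.span (ZMod q) {d}) ⊓ E := by
  apply le_antisymm
  · refine le_inf (sup_le ?_ ?_) (sup_le hAE inf_le_right)
    · exact le_sup_left.trans le_sup_left
    · exact inf_le_left.trans (le_sup_right.trans le_sup_left)
  · rintro x hx
    rw [Submodule.mem_inf] at hx
    obtain ⟨hx1, hxE⟩ := hx
    obtain ⟨y, hy, z, hz, hsum⟩ := Submodule.mem_sup.mp hx1
    obtain ⟨a, ha, b', hb', rfl⟩ := Submodule.mem_sup.mp hy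
    obtain ⟨t, rfl⟩ := Submodule.mem_span_singleton.mp hz
    rcases eq_or_ne t 0 with rfl | ht
    · rw [zero_smul, add_zero] at hsum
      have hb'E : b' ∈ B ⊓ E := by
        rw [Submodule.mem_inf]
        refine ⟨hb', ?_⟩
        have : b' = x - a := by rw [← hsum]; abel
        rw [this]
        exact sub_mem hxE (hAE ha)
      have : x = a + b' := hsum.symm
      rw [this]
      exact add_mem (Submodule.mem_sup_left ha) (Submodule.mem_sup_right hb'E)
    · exfalso
      apply hd
      have htd : t • d ∈ B ⊔ E := by
        have : t • d = (x - a) - b' := by rw [← hsum]; abel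
        rw [this]
        exact sub_mem (Submodule.mem_sup_right (sub_mem hxE (hAE ha)))
          (Submodule.mem_sup_left hb')
      have := Submodule.smul_mem _ t⁻¹ htd
      rwa [inv_smul_smul₀ ht] at this

end submod


section final

variable (hζ : orderOf ζ = p)
  (hφ : ∀ v : V, φ (Multiplicative.ofAdd (1 : ZMod p)) (Multiplicative.ofAdd v) =
      Multiplicative.ofAdd ((ζ : ZMod q) • v))

include hζ hφ

lemma modular [NeZero p] [NeZero q] [Fact p.Prime] [Fact q.Prime]
    (X Y Z : Subgroup (Multiplicative V ⋊[φ] Multiplicative (ZMod p))) (hXZ : X ≤ Z) :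
    X ⊔ (Y ⊓ Z) = (X ⊔ Y) ⊓ Z := by
  refine le_antisymm
    (sup_le (le_inf le_sup_left hXZ)
      (le_inf (inf_le_left.trans le_sup_right) inf_le_right)) ?_
  by_cases hX : ∀ g ∈ X, Multiplicative.toAdd (SemidirectProduct.right g) = 0
  · haveI : X.Normal := normal_of_right_trivial hζ hφ X hX
    intro g hg
    rw [Subgroup.mem_inf] at hg
    obtain ⟨hgXY, hgZ⟩ := hg
    have hmem : g ∈ (↑X * ↑Y : Set (Multiplicative V ⋊[φ] Multiplicative (ZMod p))) := by
      rw [← Subgroup.normal_mul]; exact hgXY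
    obtain ⟨x, hx, y, hy, rfl⟩ := hmem
    have hyZ : y ∈ Z := by
      have := mul_mem (Z.inv_mem (hXZ hx)) hgZ
      rwa [inv_mul_cancel_left] at this
    exact mul_mem (Subgroup.mem_sup_left hx)
      (Subgroup.mem_sup_right (Subgroup.mem_inf.mpr ⟨hy, hyZ⟩))
  by_cases hY : ∀ g ∈ Y, Multiplicative.toAdd (SemidirectProduct.right g) = 0
  · haveI : Y.Normal := normal_of_right_trivial hζ hφ Y hY
    intro g hg
    rw [Subgroup.mem_inf] at hg
    obtain ⟨hgXY, hgZ⟩ := hg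
    have hmem : g ∈ (↑X * ↑Y : Set (Multiplicative V ⋊[φ] Multiplicative (ZMod p))) := by
      rw [← Subgroup.mul_normal]; exact hgXY
    obtain ⟨x, hx, y, hy, rfl⟩ := hmem
    have hyZ : y ∈ Z := by
      have := mul_mem (Z.inv_mem (hXZ hx)) hgZ
      rwa [inv_mul_cancel_left] at this
    exact mul_mem (Subgroup.mem_sup_left hx)
      (Subgroup.mem_sup_right (Subgroup.mem_inf.mpr ⟨hy, hyZ⟩))
  push_neg at hX hY
  obtain ⟨gx, hgxX, hgx⟩ := hX
  obtain ⟨gy, hgyY, hgy⟩ := hY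
  obtain ⟨u, hu⟩ := exists_gen hζ hφ X gx hgxX hgx
  obtain ⟨v, hv⟩ := exists_gen hζ hφ Y gy hgyY hgy
  have hp1 : p ≠ 1 := (Fact.out : p.Prime).ne_one
  set A : Submodule (ZMod q) V := Sv φ X with hA
  set B : Submodule (ZMod q) V := Sv φ Y with hB
  set E : Submodule (ZMod q) V := Sv φ Z with hE
  have hXK : X = KK hζ hφ A u := classify hζ hφ X u hu
  have hYK : Y = KK hζ hφ B v := classify hζ hφ Y v hv
  have hZK : Z = KK hζ hφ E u := classify hζ hφ Z u (hXZ hu)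
  have hAE : A ≤ E := fun x hx => hXZ hx
  by_cases hc : u - v ∈ B ⊔ E
  · obtain ⟨bb, hbb, ec, hec, hbe⟩ := Submodule.mem_sup.mp hc
    have hw : ee φ ((1 - (ζ : ZMod q)) • (v + bb)) 1 ∈ Y ⊓ Z := by
      rw [Subgroup.mem_inf]
      constructor
      · rw [hYK, mem_KK, cc_one hp1]
        have : (1 - (ζ : ZMod q)) • (v + bb) - (1 - (ζ : ZMod q)) • v
            = (1 - (ζ : ZMod q)) • bb := by module
        rw [this]
        exact B.smul_mem _ hbb
      · rw [hZK, mem_KK, cc_one hp1]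
        have h2 : (1 - (ζ : ZMod q)) • (v + bb) - (1 - (ζ : ZMod q)) • u
            = (-(1 - (ζ : ZMod q))) • (u - v - bb) := by module
        have h3 : u - v - bb = ec := by rw [← hbe]; abel
        rw [h2, h3]
        exact E.smul_mem _ hec
    have hYZK : Y ⊓ Z = KK hζ hφ (B ⊓ E) (v + bb) := by
      have h := classify hζ hφ (Y ⊓ Z) (v + bb) hw
      rwa [Sv_inf, ← hB, ← hE] at h
    have huw : u - (v + bb) = ec := by
      rw [show u - (v + bb) = u - v - bb from by abel, ← hbe]; abel
    apply ge_of_eq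
    rw [hYZK, hXK, hYK, hZK,
      kk_sup hζ hφ A (B ⊓ E) u (v + bb), kk_sup hζ hφ A B u v,
      kk_inf hζ hφ, huw]
    have hspan : u - v = bb + ec := by rw [← hbe]
    rw [hspan]
    exact congrArg (fun W => KK hζ hφ W u) (subid_a hAE hbb hec)
  · have hYZ : Y ⊓ Z = VS φ (B ⊓ E) := by
      rw [hYK, hZK]
      exact inf_vs hζ hφ B E v u hc
    apply ge_of_eq
    rw [hYZ, hXK, hYK, hZK, kk_sup_vs hζ hφ A (B ⊓ E) u,
      kk_sup hζ hφ A B u v, kk_inf hζ hφ]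
    exact congrArg (fun W => KK hζ hφ W u) (subid_b hAE hc)

end final


section notqh

variable (hζ : orderOf ζ = p)
  (hφ : ∀ v : V, φ (Multiplicative.ofAdd (1 : ZMod p)) (Multiplicative.ofAdd v) =
      Multiplicative.ofAdd ((ζ : ZMod q) • v))

include hζ hφ

lemma not_qh [NeZero p] [NeZero q] [Fact p.Prime] [Fact q.Prime]
    (hpq : p ∣ q - 1) {w : V} (hw : w ≠ 0) :
    ∃ X Y : Subgroup (Multiplicative V ⋊[φ] Multiplicative (ZMod p)),
      (X : Set (Multiplicative V ⋊[φ] Multiplicative (ZMod p))) * (Y : Set _) ≠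
        (Y : Set (Multiplicative V ⋊[φ] Multiplicative (ZMod p))) * (X : Set _) := by
  have hp1 : p ≠ 1 := (Fact.out : p.Prime).ne_one
  have hord : orderOf ((ζ : ZMod q)) = p := orderOf_units.trans hζ
  refine ⟨KK hζ hφ ⊥ w, KK hζ hφ ⊥ 0, fun hEq => ?_⟩
  have key : ∀ m₀ : ZMod p, ∃ m : ZMod p, (1 - cc ζ m₀) = -(1 - cc ζ m) := by
    intro m₀
    have hx : ee φ ((1 - cc ζ m₀) • w) m₀ ∈ KK hζ hφ (⊥ : Submodule (ZMod q) V) w := by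
      rw [mem_KK, sub_self]; exact Submodule.zero_mem _
    have hy : ee φ 0 (-m₀) ∈ KK hζ hφ (⊥ : Submodule (ZMod q) V) 0 := by
      rw [mem_KK, smul_zero, sub_zero]; exact Submodule.zero_mem _
    have hmem : ee φ ((1 - cc ζ m₀) • w) 0 ∈
        ((KK hζ hφ (⊥ : Submodule (ZMod q) V) w :
            Set (Multiplicative V ⋊[φ] Multiplicative (ZMod p))) *
          (KK hζ hφ (⊥ : Submodule (ZMod q) V) 0 :
            Set (Multiplicative V ⋊[φ] Multiplicative (ZMod p)))) := by
      rw [Set.mem_mul]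
      refine ⟨_, hx, _, hy, ?_⟩
      rw [ee_mul hζ hφ, smul_zero, add_zero, add_neg_cancel]
    rw [hEq, Set.mem_mul] at hmem
    obtain ⟨y, hy', x, hx', hprod⟩ := hmem
    obtain ⟨vy, l, rfl⟩ := ee_cases y
    obtain ⟨vx, m, rfl⟩ := ee_cases x
    rw [SetLike.mem_coe, mem_KK, smul_zero, sub_zero, Submodule.mem_bot] at hy'
    rw [SetLike.mem_coe, mem_KK, Submodule.mem_bot, sub_eq_zero] at hx'
    subst hy'
    rw [ee_mul hζ hφ, zero_add, ee_inj] at hprod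
    obtain ⟨hvec, hadd⟩ := hprod
    have hl : l = -m := eq_neg_of_add_eq_zero_left hadd
    rw [hx', hl, smul_smul] at hvec
    have hsc : cc ζ (-m) * (1 - cc ζ m) = 1 - cc ζ m₀ := by
      have h0 : (cc ζ (-m) * (1 - cc ζ m) - (1 - cc ζ m₀)) • w = 0 := by
        rw [sub_smul, hvec, sub_self]
      rcases smul_eq_zero.mp h0 with h | h
      · exact sub_eq_zero.mp h
      · exact absurd h hw
    refine ⟨-m, ?_⟩
    rw [← hsc, mul_sub, mul_one, mul_comm (cc ζ (-m)) (cc ζ m), cc_mul_cc_neg hζ, neg_sub]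
  have hinj : Function.Injective (fun m : ZMod p => 1 - cc ζ m) := by
    intro a b hab
    simp only at hab
    have h1 : cc ζ a = cc ζ b := by
      have := sub_right_injective hab
      exact this
    rw [cc, cc] at h1
    have h1' : ζ ^ a.val = ζ ^ b.val := by
      apply Units.ext
      rw [Units.val_pow_eq_pow_val, Units.val_pow_eq_pow_val]
      exact h1
    have h2 := pow_eq_pow_iff_modEq.mp h1'
    rw [hζ, Nat.ModEq, Nat.mod_eq_of_lt (ZMod.val_lt a), Nat.mod_eq_of_lt (ZMod.val_lt b)] at h2
    calc a = ((a.val : ℕ) : ZMod p) := (ZMod.natCast_zmod_val a).symm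
    _ = b := by rw [h2, ZMod.natCast_zmod_val]
  have hinj2 : Function.Injective (fun m : ZMod p => -(1 - cc ζ m)) :=
    fun a b h => hinj (neg_injective h)
  classical
  have hsub : Finset.image (fun m : ZMod p => 1 - cc ζ m) Finset.univ ⊆
      Finset.image (fun m : ZMod p => -(1 - cc ζ m)) Finset.univ := by
    intro x hx
    rw [Finset.mem_image] at hx ⊢
    obtain ⟨m₀, _, rfl⟩ := hx
    obtain ⟨m, hm⟩ := key m₀
    exact ⟨m, Finset.mem_univ m, hm.symm⟩
  have hcards : (Finset.image (fun m : ZMod p => -(1 - cc ζ m)) Finset.univ).card ≤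
      (Finset.image (fun m : ZMod p => 1 - cc ζ m) Finset.univ).card := by
    rw [Finset.card_image_of_injective _ hinj2, Finset.card_image_of_injective _ hinj]
  have heq := Finset.eq_of_subset_of_card_le hsub hcards
  have e1 : ∑ x ∈ Finset.image (fun m : ZMod p => 1 - cc ζ m) Finset.univ, x
      = ∑ m : ZMod p, (1 - cc ζ m) :=
    Finset.sum_image (fun x _ y _ h => hinj h)
  have e2 : ∑ x ∈ Finset.image (fun m : ZMod p => -(1 - cc ζ m)) Finset.univ, x
      = ∑ m : ZMod p, -(1 - cc ζ m) :=
    Finset.sum_image (fun x _ y _ h => hinj2 h)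
  have hsum : ∑ m : ZMod p, (1 - cc ζ m) = ∑ m : ZMod p, -(1 - cc ζ m) := by
    rw [← e1, ← e2, heq]
  have hccsum : ∑ m : ZMod p, cc ζ m = 0 := by
    have hbij : ∑ m : ZMod p, cc ζ m = ∑ i ∈ Finset.range p, (ζ : ZMod q) ^ i := by
      refine Finset.sum_nbij' (fun m : ZMod p => m.val) (fun i : ℕ => (i : ZMod p))
        (fun a _ => Finset.mem_range.mpr (ZMod.val_lt a)) (fun i _ => Finset.mem_univ _)
        (fun a _ => ZMod.natCast_zmod_val a)
        (fun i hi => ZMod.val_natCast_of_lt (Finset.mem_range.mp hi))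
        (fun a _ => rfl)
    have hgeo := geom_sum_mul ((ζ : ZMod q)) p
    have hz : (ζ : ZMod q) ^ p = 1 := by rw [← hord]; exact pow_orderOf_eq_one _
    rw [hz, sub_self] at hgeo
    have hzne : (ζ : ZMod q) - 1 ≠ 0 := sub_ne_zero_of_ne (zeta_ne_one hp1 hζ)
    rcases mul_eq_zero.mp hgeo with h | h
    · rw [hbij]; exact h
    · exact absurd h hzne
  have hsum1 : ∑ m : ZMod p, (1 - cc ζ m) = (p : ZMod q) := by
    rw [Finset.sum_sub_distrib, hccsum, sub_zero, Finset.sum_const, Finset.card_univ,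
      ZMod.card p, nsmul_eq_mul, mul_one]
  have hsum2 : ∑ m : ZMod p, -(1 - cc ζ m) = -(p : ZMod q) := by
    rw [Finset.sum_neg_distrib, hsum1]
  rw [hsum1, hsum2] at hsum
  have hpp : ((p : ZMod q)) + ((p : ZMod q)) = 0 := eq_neg_iff_add_eq_zero.mp hsum
  have h2p : ((2 * p : ℕ) : ZMod q) = 0 := by push_cast; rw [two_mul]; exact hpp
  have hqdvd : q ∣ 2 * p := (ZMod.natCast_eq_zero_iff _ _).mp h2p
  have hq2 : 2 ≤ q := (Fact.out : q.Prime).two_le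
  have hp2 : 2 ≤ p := (Fact.out : p.Prime).two_le
  have hple : p ≤ q - 1 := Nat.le_of_dvd (by omega) hpq
  rcases (Nat.Prime.dvd_mul (Fact.out : q.Prime)).mp hqdvd with h | h
  · have := Nat.le_of_dvd (by norm_num) h
    omega
  · have := Nat.le_of_dvd (by omega) h
    omega

end notqh

end Stmt18Aux


/-- Let `p, q` be primes with `p ∣ q − 1`, let `ζ` be an element of order `p` in
`(ℤ/qℤ)ˣ`, let `V` be a nontrivial vector space over `ℤ/qℤ`, and let
`G = V ⋊ ℤ/pℤ` be the semidirect product in which the generator `1` of `ℤ/pℤ` acts on `V`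
by scalar multiplication by `ζ`.  Then the lattice of subgroups of `G` is modular, but `G`
is not quasihamiltonian: some subgroups `X`, `Y` satisfy `X·Y ≠ Y·X` as sets. -/
theorem stmt18 (p q : ℕ) (hp : p.Prime) (hq : q.Prime) (hpq : p ∣ q - 1)
    (ζ : (ZMod q)ˣ) (hζ : orderOf ζ = p)
    (V : Type*) [AddCommGroup V] [Module (ZMod q) V] [Nontrivial V]
    (φ : Multiplicative (ZMod p) →* MulAut (Multiplicative V))
    (hφ : ∀ v : V,
      φ (Multiplicative.ofAdd (1 : ZMod p)) (Multiplicative.ofAdd v) =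
        Multiplicative.ofAdd ((ζ : ZMod q) • v)) :
    (∀ X Y Z : Subgroup (Multiplicative V ⋊[φ] Multiplicative (ZMod p)),
        X ≤ Z → X ⊔ (Y ⊓ Z) = (X ⊔ Y) ⊓ Z) ∧
    (∃ X Y : Subgroup (Multiplicative V ⋊[φ] Multiplicative (ZMod p)),
        (X : Set (Multiplicative V ⋊[φ] Multiplicative (ZMod p))) * (Y : Set _) ≠
          (Y : Set (Multiplicative V ⋊[φ] Multiplicative (ZMod p))) * (X : Set _)) := by
  haveI : Fact p.Prime := ⟨hp⟩
  haveI : Fact q.Prime := ⟨hq⟩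
  haveI : NeZero p := ⟨hp.pos.ne'⟩
  haveI : NeZero q := ⟨hq.pos.ne'⟩
  constructor
  · intro X Y Z hXZ
    exact Stmt18Aux.modular hζ hφ X Y Z hXZ
  · obtain ⟨w, hw⟩ := exists_ne (0 : V)
    exact Stmt18Aux.not_qh hζ hφ hpq hw
end

section
/- (Mukhin's example) Let p be a prime, let E = ℤ/pℤ, and let G = E^{(ℕ)} × E^{ℕ} be the direct product of the direct sum E^{(ℕ)} = ⨁_{i∈ℕ} E equipped with the discrete topology and the full cartesian power E^{ℕ} = ∏_{i∈ℕ} E equipped with the product topology (each factor E discrete). Then G is a locally compact abelian topological group whose lattice of closed subgroups is not modular: there exist closed subgroups X, Y, Z of G with X ⊆ Z such that cl⟨X ∪ (Y ∩ Z)⟩ ≠ cl⟨X ∪ Y⟩ ∩ Z, where cl⟨S⟩ denotes the closure of the subgroup generated by S. -/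
/-- The direct sum `⨁_{i∈ℕ} ℤ/pℤ` carries the discrete topology. -/
instance (p : ℕ) : TopologicalSpace (DirectSum ℕ (fun _ => ZMod p)) := ⊥

instance (p : ℕ) : DiscreteTopology (DirectSum ℕ (fun _ => ZMod p)) := ⟨rfl⟩

/-- (Mukhin's example) Let `p` be a prime, `E = ℤ/pℤ`, and
`G = E^{(ℕ)} × E^{ℕ}`, the product of the direct sum `⨁_{i∈ℕ} E` with the discrete
topology and the full cartesian power `∏_{i∈ℕ} E` with the product topology (each factor
discrete). Then `G` is a locally compact Hausdorff abelian topological group whose lattice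
of closed subgroups is not modular: there are closed subgroups `X ⊆ Z` and `Y` with
`cl⟨X ∪ (Y ∩ Z)⟩ ≠ cl⟨X ∪ Y⟩ ∩ Z`. -/
theorem stmt19 (p : ℕ) (hp : p.Prime) :
    LocallyCompactSpace (DirectSum ℕ (fun _ => ZMod p) × (ℕ → ZMod p)) ∧
    T2Space (DirectSum ℕ (fun _ => ZMod p) × (ℕ → ZMod p)) ∧
    IsTopologicalAddGroup (DirectSum ℕ (fun _ => ZMod p) × (ℕ → ZMod p)) ∧
    ∃ X Y Z : AddSubgroup (DirectSum ℕ (fun _ => ZMod p) × (ℕ → ZMod p)),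
      IsClosed (X : Set (DirectSum ℕ (fun _ => ZMod p) × (ℕ → ZMod p))) ∧
      IsClosed (Y : Set (DirectSum ℕ (fun _ => ZMod p) × (ℕ → ZMod p))) ∧
      IsClosed (Z : Set (DirectSum ℕ (fun _ => ZMod p) × (ℕ → ZMod p))) ∧
      X ≤ Z ∧
      (X ⊔ (Y ⊓ Z)).topologicalClosure ≠ (X ⊔ Y).topologicalClosure ⊓ Z := by
  haveI : Fact p.Prime := ⟨hp⟩
  haveI : NeZero p := ⟨hp.ne_zero⟩
  set A := DirectSum ℕ (fun _ => ZMod p)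
  set B := ℕ → ZMod p
  haveI : IsTopologicalAddGroup A :=
    { toContinuousAdd := ⟨continuous_of_discreteTopology⟩
      toContinuousNeg := ⟨continuous_of_discreteTopology⟩ }
  haveI : CompactSpace B := by infer_instance
  refine ⟨by infer_instance, by infer_instance, by infer_instance, ?_⟩
  -- the canonical inclusion of the direct sum into the product
  let f : A →+ B := DFinsupp.coeFnAddMonoidHom
  have hfc : Continuous f := continuous_of_discreteTopology
  -- the constant sequence 1
  set c : B := fun _ => (1 : ZMod p) with hc
  have hcC : IsOfFinAddOrder c := by
    refine isOfFinAddOrder_iff_nsmul_eq_zero.2 ⟨p, hp.pos, ?_⟩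
    funext i
    simp [hc, ZMod.natCast_self]
  set X : AddSubgroup (A × B) := (⊤ : AddSubgroup A).prod ⊥ with hX
  set Y : AddSubgroup (A × B) :=
    AddMonoidHom.ker ((f.comp (AddMonoidHom.fst A B)) - AddMonoidHom.snd A B) with hY
  set Z : AddSubgroup (A × B) := (⊤ : AddSubgroup A).prod (AddSubgroup.zmultiples c) with hZ
  have hYmem : ∀ x : A × B, x ∈ Y ↔ f x.1 = x.2 := by
    intro x
    simp [hY, AddMonoidHom.mem_ker, sub_eq_zero]
  have hXc : IsClosed (X : Set (A × B)) := by
    have : (X : Set (A × B)) = Set.univ ×ˢ ({0} : Set B) := by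
      ext ⟨a, b⟩
      simp [hX, AddSubgroup.mem_prod, Set.mem_prod, AddSubgroup.mem_bot, eq_comm]
    rw [this]
    exact isClosed_univ.prod isClosed_singleton
  have hYc : IsClosed (Y : Set (A × B)) := by
    have : (Y : Set (A × B)) = {x : A × B | f x.1 - x.2 = 0} := by
      ext x; simp [hYmem, sub_eq_zero]
    rw [this]
    exact isClosed_eq ((hfc.comp continuous_fst).sub continuous_snd) continuous_const
  have hCfin : (AddSubgroup.zmultiples c : Set B).Finite := hcC.finite_zmultiples
  have hZc : IsClosed (Z : Set (A × B)) := by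
    have : (Z : Set (A × B)) = Set.univ ×ˢ (AddSubgroup.zmultiples c : Set B) := by
      ext ⟨a, b⟩
      simp [hZ, AddSubgroup.mem_prod, Set.mem_prod]
    rw [this]
    exact isClosed_univ.prod hCfin.isClosed
  have hXZ : X ≤ Z := AddSubgroup.prod_mono le_rfl bot_le
  refine ⟨X, Y, Z, hXc, hYc, hZc, hXZ, ?_⟩
  -- Y ⊓ Z ≤ X
  have hYZ : Y ⊓ Z ≤ X := by
    rintro ⟨a, b⟩ ⟨hy, hz⟩
    have hb : f a = b := (hYmem _).1 hy
    obtain ⟨-, n, hn⟩ := (AddSubgroup.mem_prod).1 hz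
    have hn' : n • c = b := hn
    -- b is the constant sequence n, but b = f a has finite support
    have hconst : ∀ i, b i = (n : ZMod p) := by
      intro i
      rw [← hn']
      show n • (c i) = (n : ZMod p)
      simp [hc, zsmul_eq_mul]
    have hn0 : (n : ZMod p) = 0 := by
      by_contra h0
      obtain ⟨i, hi⟩ := Infinite.exists_notMem_finset (DFinsupp.support a)
      have : b i = 0 := by
        rw [← hb]
        show a i = 0
        exact DFinsupp.notMem_support_iff.1 hi
      rw [hconst i] at this
      exact h0 this
    have hb0 : b = 0 := by
      funext i; rw [hconst i, hn0]; rfl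
    exact (AddSubgroup.mem_prod).2 ⟨trivial, by simp [hb0]⟩
  have hLHS : (X ⊔ (Y ⊓ Z)).topologicalClosure = X := by
    rw [sup_eq_left.2 hYZ]
    exact SetLike.ext' hXc.closure_eq
  rw [hLHS]
  intro hEq
  -- (0, c) belongs to the right-hand side but not to X
  have hmem : ((0 : A), c) ∈ (X ⊔ Y).topologicalClosure ⊓ Z := by
    constructor
    · -- (0, c) is in the closure of X ⊔ Y
      -- the elements (0, f a) all lie in X ⊔ Y
      have hsub : ∀ a : A, ((0 : A), f a) ∈ X ⊔ Y := by
        intro a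
        have h1 : ((-a : A), (0 : B)) ∈ X := (AddSubgroup.mem_prod).2 ⟨trivial, rfl⟩
        have h2 : (a, f a) ∈ Y := (hYmem _).2 rfl
        have := AddSubgroup.add_mem _ (AddSubgroup.mem_sup_left h1)
          (AddSubgroup.mem_sup_right h2)
        simpa using this
      -- approximate c by truncations
      set an : ℕ → A := fun n => DFinsupp.mk (Finset.range n) (fun _ => (1 : ZMod p)) with han
      have htend : Filter.Tendsto (fun n => ((0 : A), f (an n))) Filter.atTop
          (nhds ((0 : A), c)) := by
        refine Filter.Tendsto.prodMk_nhds tendsto_const_nhds ?_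
        rw [tendsto_pi_nhds]
        intro i
        have hev : ∀ n, n ≥ i + 1 → f (an n) i = c i := by
          intro n hn
          have hi : i ∈ Finset.range n := Finset.mem_range.2 (by omega)
          have h1 : f (an n) i = (an n) i := rfl
          rw [h1, han]
          simp [DFinsupp.mk_apply, hi, hc]
        exact tendsto_nhds_of_eventually_eq
          (Filter.eventually_atTop.2 ⟨i + 1, fun n hn => hev n hn⟩)
      exact mem_closure_of_tendsto htend
        (Filter.Eventually.of_forall fun n => hsub (an n))
    · exact (AddSubgroup.mem_prod).2 ⟨trivial, AddSubgroup.mem_zmultiples c⟩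
  rw [← hEq] at hmem
  obtain ⟨-, hc0⟩ := (AddSubgroup.mem_prod).1 hmem
  have hcz : c = 0 := AddSubgroup.mem_bot.1 hc0
  have : c 0 = 0 := congrFun hcz 0
  simp only [hc] at this
  exact one_ne_zero this
end
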